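/- arXiv:2208.11966 — 2 statements merged into one kernel-verified Lean document; each statement's English description precedes it below -/
import Mathlib

section
/- The quotient ring ℂ[𝗓]/QDet(𝗓) is an integral domain (being isomorphic, by the main theorem, to a subalgebra of a polynomial ring, namely the invariant ring ℛ^G). -/
open MvPolynomial

/-- Number of `j`-indices of the variables `𝗓_{i,j}` in row `i`: one variable `𝗓_{0,0}`
for `i = 0`, one variable `𝗓_{m+1,0}` for `i = m+1`, and `s_i + 1` variables
`𝗓_{i,0},…,𝗓_{i,s_i}` for `1 ≤ i ≤ m`. -/
def nj (m : ℕ) (s : ℕ → ℕ) (i : ℕ) : ℕ := if i = 0 ∨ i = m + 1 then 1 else s i + 1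

/-- The index type of the variables of the polynomial ring `ℂ[𝗓]`. -/
abbrev ZIdx (m : ℕ) (s : ℕ → ℕ) : Type := Σ i : Fin (m + 2), Fin (nj m s i.val)

/-- The variable index `(i,j)` (with a junk value for out-of-range indices). -/
def zidx (m : ℕ) (s : ℕ → ℕ) (i j : ℕ) : ZIdx m s :=
  if h : i < m + 2 ∧ j < nj m s i then ⟨⟨i, h.1⟩, ⟨j, h.2⟩⟩
  else ⟨⟨0, by omega⟩, ⟨0, by simp [nj]⟩⟩

/-- The polynomial ring `ℂ[𝗓]`. -/
abbrev CZ (m : ℕ) (s : ℕ → ℕ) : Type := MvPolynomial (ZIdx m s) ℂ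

/-- The variable `𝗓_{i,j}`. -/
noncomputable def Zv (m : ℕ) (s : ℕ → ℕ) (i j : ℕ) : CZ m s := X (zidx m s i j)

/-- `W_t = 𝗓_{t,1}·𝗓_{t,2}⋯𝗓_{t,s_t−1}`. -/
noncomputable def Wq (m : ℕ) (s : ℕ → ℕ) (t : ℕ) : CZ m s :=
  ∏ u ∈ Finset.Icc 1 (s t - 1), Zv m s t u

/-- The quasiminor `q_{i,j} = 𝗓_{i−1,0}·𝗓_{j,s_j} − 𝗓_{i,s_i}·(∏_{t=i}^{j−1} W_t)·𝗓_{j−1,0}`. -/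
noncomputable def qm (m : ℕ) (s : ℕ → ℕ) (i j : ℕ) : CZ m s :=
  Zv m s (i - 1) 0 * Zv m s j (s j)
    - Zv m s i (s i) * (∏ t ∈ Finset.Icc i (j - 1), Wq m s t) * Zv m s (j - 1) 0

/-- The quasideterminantal ideal `QDet(𝗓)`, generated by the quasiminors `q_{i,j}`
for `1 ≤ i < j ≤ m+1`. -/
noncomputable def QDet (m : ℕ) (s : ℕ → ℕ) : Ideal (CZ m s) :=
  Ideal.span {q | ∃ i j : ℕ, 1 ≤ i ∧ i < j ∧ j ≤ m + 1 ∧ q = qm m s i j}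

/-- `s_t = β_t − 1` for `1 ≤ t ≤ m` and `s_{m+1} = 0`. -/
def sfun (m : ℕ) (β : ℕ → ℕ) (t : ℕ) : ℕ := if t ≤ m then β t - 1 else 0

/-- `E = 𝗓_{0,0}·𝗓_{2,s_2}·𝗓_{3,s_3}⋯𝗓_{m+1,s_{m+1}}`. -/
noncomputable def Emon (m : ℕ) (s : ℕ → ℕ) : CZ m s :=
  Zv m s 0 0 * ∏ t ∈ Finset.Icc 2 (m + 1), Zv m s t (s t)

namespace QDP

variable (m : ℕ) (s : ℕ → ℕ)

lemma nj_pos (i : ℕ) : 0 < nj m s i := by unfold nj; split <;> omega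

lemma nj_mid {i : ℕ} (h0 : i ≠ 0) (h1 : i ≠ m + 1) : nj m s i = s i + 1 := by
  unfold nj; simp [h0, h1]

lemma zidx_eq {i j : ℕ} (hi : i < m + 2) (hj : j < nj m s i) :
    zidx m s i j = ⟨⟨i, hi⟩, ⟨j, hj⟩⟩ := by
  unfold zidx; rw [dif_pos ⟨hi, hj⟩]

lemma eq_zidx_iff {i j : ℕ} (hi : i < m + 2) (hj : j < nj m s i) {v : ZIdx m s} :
    v = zidx m s i j ↔ v.1.val = i ∧ v.2.val = j := by
  obtain ⟨⟨i', hi'⟩, ⟨j', hj'⟩⟩ := v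
  rw [zidx_eq m s hi hj]
  constructor
  · rintro h
    have h1 : i' = i := congrArg (fun x => (Sigma.fst x).val) h
    subst h1
    have h2 : j' = j := by
      have h3 := eq_of_heq (Sigma.mk.inj_iff.mp h).2
      exact Fin.val_eq_of_eq h3
    exact ⟨rfl, h2⟩
  · rintro ⟨h1, h2⟩
    dsimp at h1 h2
    subst h1; subst h2; rfl

variable {m s} in
lemma valx {i : ℕ} (hi : i ≤ m + 1) : i < m + 2 ∧ 0 < nj m s i := ⟨by omega, nj_pos m s i⟩

variable {m s} in
lemma valy (hs2 : s (m + 1) = 0) {b : ℕ} (hb1 : 1 ≤ b) (hb2 : b ≤ m + 1) :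
    b < m + 2 ∧ s b < nj m s b := by
  refine ⟨by omega, ?_⟩
  by_cases hbm : b = m + 1
  · subst hbm; rw [hs2]; exact nj_pos m s _
  · rw [nj_mid m s (by omega) hbm]; omega

variable {m s} in
lemma valv {t u : ℕ} (ht1 : 1 ≤ t) (ht2 : t ≤ m) (hu2 : u ≤ s t - 1) (hst : 1 ≤ s t) :
    t < m + 2 ∧ u < nj m s t := by
  refine ⟨by omega, ?_⟩
  rw [nj_mid m s (by omega) (by omega)]; omega

/-- every index is a `zidx` of its components -/
lemma self_zidx (v : ZIdx m s) : v = zidx m s v.1.val v.2.val := by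
  obtain ⟨⟨i, hi⟩, ⟨j, hj⟩⟩ := v
  rw [zidx_eq m s hi hj]

/-- weight used for termination of rewriting -/
def wt (v : ZIdx m s) : ℕ :=
  if v.1.val = 0 then m + 1 else if v.1.val = m + 1 then m + 1
  else if v.2.val = 0 then m + 1 - v.1.val
  else if v.2.val = s v.1.val then v.1.val else 0

def Mw (d : ZIdx m s →₀ ℕ) : ℕ := d.sum fun v n => n * wt m s v

lemma Mw_add (d e : ZIdx m s →₀ ℕ) : Mw m s (d + e) = Mw m s d + Mw m s e := by
  unfold Mw
  apply Finsupp.sum_add_index' (fun v => by simp) (fun v n n' => by ring)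

lemma Mw_single (v : ZIdx m s) (k : ℕ) : Mw m s (Finsupp.single v k) = k * wt m s v := by
  unfold Mw
  exact Finsupp.sum_single_index (by simp)

variable {m s} in
lemma wt_x {a : ℕ} (ha : a ≤ m) (hs1 : ∀ t, 1 ≤ t → t ≤ m → 1 ≤ s t) :
    wt m s (zidx m s a 0) = m + 1 - a := by
  have hv : a < m + 2 ∧ 0 < nj m s a := valx (by omega)
  rw [zidx_eq m s hv.1 hv.2]
  by_cases ha0 : a = 0
  · subst ha0; simp [wt]
  · have := hs1 a (by omega) ha
    simp only [wt]
    rw [if_neg ha0, if_neg (by omega)]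
    simp

variable {m s} in
lemma wt_y (hs1 : ∀ t, 1 ≤ t → t ≤ m → 1 ≤ s t) (hs2 : s (m + 1) = 0) {b : ℕ}
    (hb1 : 1 ≤ b) (hb2 : b ≤ m + 1) : wt m s (zidx m s b (s b)) = b := by
  have hv := valy hs2 hb1 hb2
  rw [zidx_eq m s hv.1 hv.2]
  by_cases hbm : b = m + 1
  · subst hbm; simp [wt]
  · have := hs1 b hb1 (by omega)
    simp only [wt]
    rw [if_neg (by omega), if_neg (by omega), if_neg (by omega)]
    simp

variable {m s} in
lemma wt_v (hs1 : ∀ t, 1 ≤ t → t ≤ m → 1 ≤ s t) {t u : ℕ} (ht1 : 1 ≤ t) (ht2 : t ≤ m)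
    (hu1 : 1 ≤ u) (hu2 : u ≤ s t - 1) : wt m s (zidx m s t u) = 0 := by
  have hst := hs1 t ht1 ht2
  have hv := valv ht1 ht2 hu2 hst
  rw [zidx_eq m s hv.1 hv.2]
  simp only [wt]
  rw [if_neg (by omega), if_neg (by omega), if_neg (by omega), if_neg (by omega)]

def Normal (d : ZIdx m s →₀ ℕ) : Prop :=
  ∀ a b : ℕ, a ≤ m → 1 ≤ b → b ≤ m + 1 →
    d (zidx m s a 0) ≠ 0 → d (zidx m s b (s b)) ≠ 0 → b ≤ a + 1

/-- product of coefficient-1 monomials -/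
lemma prodMon {ι : Type*} (F : Finset ι) (h : ι → (ZIdx m s →₀ ℕ)) :
    (∏ a ∈ F, (monomial (h a) (1 : ℂ) : CZ m s)) = monomial (∑ a ∈ F, h a) 1 := by
  classical
  induction F using Finset.induction_on with
  | empty => simp
  | insert _ _ hx ih =>
    rw [Finset.prod_insert hx, Finset.sum_insert hx, ih, monomial_mul, one_mul]

lemma X_as_monomial (v : ZIdx m s) : (X v : CZ m s) = monomial (Finsupp.single v 1) 1 := rfl

noncomputable def wdeg (t : ℕ) : ZIdx m s →₀ ℕ :=
  ∑ u ∈ Finset.Icc 1 (s t - 1), Finsupp.single (zidx m s t u) 1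

noncomputable def ydeg (b : ℕ) : ZIdx m s →₀ ℕ :=
  Finsupp.single (zidx m s 1 (s 1)) 1 + Finsupp.single (zidx m s (b - 1) 0) 1
    + ∑ t ∈ Finset.Icc 1 (b - 1), wdeg m s t

noncomputable def wmap (v : ZIdx m s) : ZIdx m s →₀ ℕ :=
  if 1 ≤ v.1.val ∧ v.2.val = s v.1.val then ydeg m s v.1.val else Finsupp.single v 1

noncomputable def phi : CZ m s →ₐ[ℂ] CZ m s :=
  aeval fun v => monomial (wmap m s v) (1 : ℂ)

noncomputable def Tm (d : ZIdx m s →₀ ℕ) : ZIdx m s →₀ ℕ := d.sum fun v n => n • wmap m s v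

lemma Wq_as_monomial (t : ℕ) : Wq m s t = monomial (wdeg m s t) (1 : ℂ) := by
  unfold Wq wdeg Zv
  rw [← prodMon]
  rfl

lemma monomial_ydeg (b : ℕ) :
    (monomial (ydeg m s b) (1 : ℂ) : CZ m s)
      = Zv m s 1 (s 1) * Zv m s (b - 1) 0 * ∏ t ∈ Finset.Icc 1 (b - 1), Wq m s t := by
  unfold ydeg Zv
  rw [X_as_monomial, X_as_monomial]
  have : ∀ t ∈ Finset.Icc 1 (b - 1), Wq m s t = monomial (wdeg m s t) (1:ℂ) :=
    fun t _ => Wq_as_monomial m s t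
  rw [Finset.prod_congr rfl this, prodMon, monomial_mul, monomial_mul, one_mul, one_mul]

lemma phi_monomial (d : ZIdx m s →₀ ℕ) (c : ℂ) :
    phi m s (monomial d c) = monomial (Tm m s d) c := by
  unfold phi
  rw [aeval_monomial]
  have h1 : (d.prod fun v k => (monomial (wmap m s v) (1:ℂ) : CZ m s) ^ k)
      = monomial (Tm m s d) 1 := by
    unfold Finsupp.prod Tm Finsupp.sum
    rw [← prodMon]
    apply Finset.prod_congr rfl
    intro v _
    dsimp only
    rw [monomial_pow, one_pow]
  rw [h1, algebraMap_eq, C_mul_monomial, mul_one]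

variable {m s} in
lemma wmap_xrole (hs1 : ∀ t, 1 ≤ t → t ≤ m → 1 ≤ s t) {i : ℕ} (hi : i ≤ m) :
    wmap m s (zidx m s i 0) = Finsupp.single (zidx m s i 0) 1 := by
  have hv : i < m + 2 ∧ 0 < nj m s i := valx (by omega)
  unfold wmap
  rw [zidx_eq m s hv.1 hv.2]
  refine if_neg ?_
  dsimp only
  by_cases hi0 : i = 0
  · subst hi0; omega
  · have := hs1 i (by omega) hi; omega

variable {m s} in
lemma wmap_vrole (hs1 : ∀ t, 1 ≤ t → t ≤ m → 1 ≤ s t) {t u : ℕ} (ht1 : 1 ≤ t) (ht2 : t ≤ m)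
    (hu1 : 1 ≤ u) (hu2 : u ≤ s t - 1) :
    wmap m s (zidx m s t u) = Finsupp.single (zidx m s t u) 1 := by
  have hst := hs1 t ht1 ht2
  have hv := valv ht1 ht2 hu2 hst
  unfold wmap
  rw [zidx_eq m s hv.1 hv.2]
  exact if_neg (by dsimp only; omega)

variable {m s} in
lemma wmap_yrole (hs2 : s (m + 1) = 0) {b : ℕ} (hb1 : 1 ≤ b) (hb2 : b ≤ m + 1) :
    wmap m s (zidx m s b (s b)) = ydeg m s b := by
  have hv := valy hs2 hb1 hb2
  unfold wmap
  rw [zidx_eq m s hv.1 hv.2, if_pos ⟨hb1, rfl⟩]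

variable {m s} in
lemma phi_x (hs1 : ∀ t, 1 ≤ t → t ≤ m → 1 ≤ s t) {i : ℕ} (hi : i ≤ m) :
    phi m s (Zv m s i 0) = Zv m s i 0 := by
  unfold phi Zv
  rw [aeval_X, wmap_xrole hs1 hi, ← X_as_monomial]

variable {m s} in
lemma phi_wq (hs1 : ∀ t, 1 ≤ t → t ≤ m → 1 ≤ s t) {t : ℕ} (ht1 : 1 ≤ t) (ht2 : t ≤ m) :
    phi m s (Wq m s t) = Wq m s t := by
  unfold Wq
  rw [map_prod]
  refine Finset.prod_congr rfl fun u hu => ?_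
  rw [Finset.mem_Icc] at hu
  unfold phi Zv
  rw [aeval_X, wmap_vrole hs1 ht1 ht2 hu.1 hu.2, ← X_as_monomial]

variable {m s} in
lemma phi_y (hs2 : s (m + 1) = 0) {b : ℕ} (hb1 : 1 ≤ b) (hb2 : b ≤ m + 1) :
    phi m s (Zv m s b (s b))
      = Zv m s 1 (s 1) * Zv m s (b - 1) 0 * ∏ t ∈ Finset.Icc 1 (b - 1), Wq m s t := by
  unfold phi Zv
  rw [aeval_X, wmap_yrole hs2 hb1 hb2, monomial_ydeg]
  rfl

variable {m s} in
lemma prod_Wq_merge {i j : ℕ} (h1 : 1 ≤ i) (h2 : i ≤ j) (f : ℕ → CZ m s) :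
    (∏ t ∈ Finset.Icc 1 (i - 1), f t) * ∏ t ∈ Finset.Icc i (j - 1), f t
      = ∏ t ∈ Finset.Icc 1 (j - 1), f t := by
  have e1 : Finset.Icc 1 (i - 1) = Finset.Ioc 0 (i - 1) := by
    rw [← Finset.Icc_add_one_left_eq_Ioc]; rfl
  have e2 : Finset.Icc i (j - 1) = Finset.Ioc (i - 1) (j - 1) := by
    rw [← Finset.Icc_add_one_left_eq_Ioc]; congr 1; omega
  have e3 : Finset.Icc 1 (j - 1) = Finset.Ioc 0 (j - 1) := by
    rw [← Finset.Icc_add_one_left_eq_Ioc]; rfl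
  rw [e1, e2, e3]
  exact Finset.prod_Ioc_consecutive f (by omega) (by omega)

variable {m s} in
lemma phi_qm (hs1 : ∀ t, 1 ≤ t → t ≤ m → 1 ≤ s t) (hs2 : s (m + 1) = 0) {i j : ℕ}
    (h1 : 1 ≤ i) (h2 : i < j) (h3 : j ≤ m + 1) : phi m s (qm m s i j) = 0 := by
  unfold qm
  rw [map_sub, map_mul, map_mul, map_mul, map_prod]
  rw [phi_x hs1 (by omega), phi_y hs2 (by omega) h3, phi_y hs2 h1 (by omega),
    phi_x hs1 (by omega)]
  have hW : ∀ t ∈ Finset.Icc i (j - 1), phi m s (Wq m s t) = Wq m s t := by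
    intro t ht
    rw [Finset.mem_Icc] at ht
    exact phi_wq hs1 (by omega) (by omega)
  rw [Finset.prod_congr rfl hW, sub_eq_zero,
    ← prod_Wq_merge (m := m) (s := s) h1 (by omega : i ≤ j) (Wq m s)]
  ring

lemma zidx_fst {i j : ℕ} (hi : i < m + 2) (hj : j < nj m s i) :
    (zidx m s i j).1.val = i := by rw [zidx_eq m s hi hj]

lemma zidx_snd {i j : ℕ} (hi : i < m + 2) (hj : j < nj m s i) :
    (zidx m s i j).2.val = j := by rw [zidx_eq m s hi hj]

variable {m s} in
lemma qm_mem {i j : ℕ} (h1 : 1 ≤ i) (h2 : i < j) (h3 : j ≤ m + 1) :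
    qm m s i j ∈ QDet m s :=
  Ideal.subset_span ⟨i, j, h1, h2, h3, rfl⟩

lemma Mw_zero : Mw m s 0 = 0 := by simp [Mw]

lemma Mw_sum {ι : Type*} (F : Finset ι) (f : ι → (ZIdx m s →₀ ℕ)) :
    Mw m s (∑ t ∈ F, f t) = ∑ t ∈ F, Mw m s (f t) := by
  classical
  induction F using Finset.induction_on with
  | empty => simp [Mw_zero]
  | insert _ _ hx ih => rw [Finset.sum_insert hx, Finset.sum_insert hx, Mw_add, ih]

variable {m s} in
lemma Mw_wv (hs1 : ∀ t, 1 ≤ t → t ≤ m → 1 ≤ s t) {a b : ℕ} (ha : 1 ≤ a) (hb : b ≤ m) :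
    Mw m s (∑ t ∈ Finset.Icc a b, wdeg m s t) = 0 := by
  rw [Mw_sum]
  refine Finset.sum_eq_zero fun t ht => ?_
  rw [Finset.mem_Icc] at ht
  unfold wdeg
  rw [Mw_sum]
  refine Finset.sum_eq_zero fun u hu => ?_
  rw [Finset.mem_Icc] at hu
  rw [Mw_single, wt_v hs1 (by omega) (by omega) hu.1 hu.2, mul_zero]

variable {m s} in
lemma reduce (hs1 : ∀ t, 1 ≤ t → t ≤ m → 1 ≤ s t) (hs2 : s (m + 1) = 0) :
    ∀ N, ∀ d : ZIdx m s →₀ ℕ, Mw m s d ≤ N →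
    ∃ d', Normal m s d' ∧ (monomial d (1 : ℂ) - monomial d' 1 : CZ m s) ∈ QDet m s := by
  intro N
  induction N using Nat.strong_induction_on with
  | _ N IH =>
  intro d hd
  by_cases hn : Normal m s d
  · exact ⟨d, hn, by simp⟩
  unfold Normal at hn
  push_neg at hn
  obtain ⟨a, b, ha, hb1, hb2, hda, hdb, hab⟩ := hn
  have hvxa : a < m + 2 ∧ 0 < nj m s a := valx (by omega)
  have hvyb := valy hs2 hb1 hb2
  have hvyi := valy hs2 (Nat.le_add_left 1 a) (by omega : a + 1 ≤ m + 1)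
  have hvxj : b - 1 < m + 2 ∧ 0 < nj m s (b - 1) := valx (by omega)
  have hxyne : zidx m s a 0 ≠ zidx m s b (s b) := by
    intro h
    have h2 := ((eq_zidx_iff m s hvyb.1 hvyb.2).1 h).1
    rw [zidx_fst m s hvxa.1 hvxa.2] at h2
    omega
  have h1a : 1 ≤ d (zidx m s a 0) := Nat.one_le_iff_ne_zero.2 hda
  have h1b : 1 ≤ d (zidx m s b (s b)) := Nat.one_le_iff_ne_zero.2 hdb
  set d0 : ZIdx m s →₀ ℕ :=
    d - Finsupp.single (zidx m s a 0) 1 - Finsupp.single (zidx m s b (s b)) 1 with hd0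
  have hdec : d = d0 + Finsupp.single (zidx m s a 0) 1 + Finsupp.single (zidx m s b (s b)) 1 := by
    ext v
    simp only [hd0, Finsupp.coe_add, Pi.add_apply, Finsupp.tsub_apply, Finsupp.single_apply]
    rcases eq_or_ne (zidx m s a 0) v with hv1 | hv1
    · have hv2 : zidx m s b (s b) ≠ v := fun h => hxyne (hv1.trans h.symm)
      rw [if_pos hv1, if_neg hv2, ← hv1]
      omega
    · rcases eq_or_ne (zidx m s b (s b)) v with hv2 | hv2
      · rw [if_neg hv1, if_pos hv2, ← hv2]
        omega
      · rw [if_neg hv1, if_neg hv2]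
        omega
  set wv : ZIdx m s →₀ ℕ := ∑ t ∈ Finset.Icc (a + 1) (b - 1), wdeg m s t with hwv
  set d' : ZIdx m s →₀ ℕ := d0 + (Finsupp.single (zidx m s (a + 1) (s (a + 1))) 1 + wv
      + Finsupp.single (zidx m s (b - 1) 0) 1) with hd'
  have e1 : (monomial d (1 : ℂ) : CZ m s)
      = monomial d0 1 * (Zv m s a 0 * Zv m s b (s b)) := by
    unfold Zv
    rw [X_as_monomial, X_as_monomial, monomial_mul, monomial_mul, one_mul, one_mul,
      ← add_assoc, ← hdec]
  have e2 : (monomial d0 (1 : ℂ) : CZ m s) * (Zv m s (a + 1) (s (a + 1)) *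
        (∏ t ∈ Finset.Icc (a + 1) (b - 1), Wq m s t) * Zv m s (b - 1) 0)
      = monomial d' 1 := by
    unfold Zv
    have hWp : (∏ t ∈ Finset.Icc (a + 1) (b - 1), Wq m s t)
        = monomial (wv) (1 : ℂ) := by
      rw [hwv, ← prodMon]
      exact Finset.prod_congr rfl fun t _ => Wq_as_monomial m s t
    rw [X_as_monomial, X_as_monomial, hWp, monomial_mul, monomial_mul, monomial_mul,
      one_mul, one_mul, one_mul, hd']
  have hqmem : (monomial d (1 : ℂ) - monomial d' 1 : CZ m s) ∈ QDet m s := by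
    have hq : (monomial d (1 : ℂ) - monomial d' 1 : CZ m s)
        = monomial d0 1 * qm m s (a + 1) b := by
      unfold qm
      rw [Nat.add_sub_cancel, mul_sub, ← e1, e2]
    rw [hq]
    exact Ideal.mul_mem_left _ _ (qm_mem (by omega) (by omega) hb2)
  have hMd : Mw m s d = Mw m s d0 + (m + 1 - a) + b := by
    conv_lhs => rw [hdec]
    rw [Mw_add, Mw_add, Mw_single, Mw_single, one_mul, one_mul,
      wt_x ha hs1, wt_y hs1 hs2 hb1 hb2]
  have hMd' : Mw m s d' = Mw m s d0 + (a + 1) + (m + 2 - b) := by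
    rw [hd', Mw_add, Mw_add, Mw_add, Mw_single, Mw_single, one_mul, one_mul,
      wt_y hs1 hs2 (by omega) (by omega), wt_x (by omega) hs1,
      Mw_wv hs1 (by omega) (by omega)]
    try omega
  have hlt : Mw m s d' < N := by omega
  obtain ⟨d'', hn'', hm''⟩ := IH (Mw m s d') hlt d' le_rfl
  refine ⟨d'', hn'', ?_⟩
  have : (monomial d (1 : ℂ) - monomial d'' 1 : CZ m s)
      = (monomial d 1 - monomial d' 1) + (monomial d' 1 - monomial d'' 1) := by ring
  rw [this]
  exact Ideal.add_mem _ hqmem hm''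

variable {m s} in
lemma reduce_poly (hs1 : ∀ t, 1 ≤ t → t ≤ m → 1 ≤ s t) (hs2 : s (m + 1) = 0) (f : CZ m s) :
    ∃ g : CZ m s, (f - g) ∈ QDet m s ∧ ∀ d ∈ g.support, Normal m s d := by
  classical
  choose ch hch1 hch2 using fun d : ZIdx m s →₀ ℕ => reduce hs1 hs2 (Mw m s d) d le_rfl
  refine ⟨∑ d ∈ f.support, monomial (ch d) (coeff d f), ?_, ?_⟩
  · have : f - ∑ d ∈ f.support, monomial (ch d) (coeff d f)
        = ∑ d ∈ f.support, C (coeff d f) * (monomial d 1 - monomial (ch d) 1) := by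
      nth_rewrite 1 [f.as_sum]
      rw [← Finset.sum_sub_distrib]
      refine Finset.sum_congr rfl fun d _ => ?_
      rw [mul_sub, C_mul_monomial, C_mul_monomial, mul_one]
    rw [this]
    exact Ideal.sum_mem _ fun d _ => Ideal.mul_mem_left _ _ (hch2 d)
  · intro d hd
    have hsub := MvPolynomial.support_sum (s := f.support)
      (f := fun d => (monomial (ch d) (coeff d f) : CZ m s)) hd
    obtain ⟨d0, _, hd0⟩ := Finset.mem_biUnion.1 hsub
    rw [support_monomial] at hd0
    by_cases h0 : coeff d0 f = 0
    · rw [if_pos h0] at hd0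
      exact absurd hd0 (Finset.notMem_empty d)
    · rw [if_neg h0] at hd0
      rw [Finset.mem_singleton.1 hd0]
      exact hch1 d0

variable {m s} in
lemma Tm_apply (d : ZIdx m s →₀ ℕ) (x : ZIdx m s) :
    Tm m s d x = ∑ v : ZIdx m s, d v * wmap m s v x := by
  unfold Tm
  rw [Finsupp.sum_apply, Finsupp.sum_fintype]
  · rfl
  · intro v; simp

variable {m s} in
lemma wdeg_apply {t : ℕ} (hs1 : ∀ t, 1 ≤ t → t ≤ m → 1 ≤ s t) (ht1 : 1 ≤ t) (ht2 : t ≤ m)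
    (v : ZIdx m s) :
    wdeg m s t v = if v.1.val = t ∧ 1 ≤ v.2.val ∧ v.2.val ≤ s t - 1 then 1 else 0 := by
  unfold wdeg
  rw [Finset.sum_apply']
  by_cases hvt : v.1.val = t
  · have hst := hs1 t ht1 ht2
    have hterm : ∀ u ∈ Finset.Icc 1 (s t - 1),
        (Finsupp.single (zidx m s t u) 1 : ZIdx m s →₀ ℕ) v
          = if u = v.2.val then 1 else 0 := by
      intro u hu
      rw [Finset.mem_Icc] at hu
      have hvv := valv ht1 ht2 hu.2 hst
      rw [Finsupp.single_apply]
      refine if_congr ?_ rfl rfl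
      rw [show (zidx m s t u = v) ↔ (v = zidx m s t u) from eq_comm,
        eq_zidx_iff m s hvv.1 hvv.2]
      constructor
      · rintro ⟨_, h⟩; exact h.symm
      · intro h; exact ⟨hvt, h.symm⟩
    rw [Finset.sum_congr rfl hterm, Finset.sum_ite_eq' (Finset.Icc 1 (s t - 1)) v.2.val
      (fun _ => (1:ℕ))]
    by_cases h2 : 1 ≤ v.2.val ∧ v.2.val ≤ s t - 1
    · rw [if_pos (Finset.mem_Icc.2 h2), if_pos ⟨hvt, h2⟩]
    · rw [if_neg (fun h => h2 (Finset.mem_Icc.1 h)), if_neg (by tauto)]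
  · refine (Finset.sum_eq_zero fun u hu => ?_).trans (by rw [if_neg (by tauto)])
    rw [Finset.mem_Icc] at hu
    have hvv := valv ht1 ht2 hu.2 (hs1 t ht1 ht2)
    rw [Finsupp.single_apply, if_neg]
    intro h
    exact hvt (h ▸ (zidx_fst m s hvv.1 hvv.2))

variable {m s} in
lemma ydeg_apply (hs1 : ∀ t, 1 ≤ t → t ≤ m → 1 ≤ s t) (hs2 : s (m + 1) = 0) {b : ℕ}
    (hb1 : 1 ≤ b) (hb2 : b ≤ m + 1) (v : ZIdx m s) :
    ydeg m s b v
      = (if v.1.val = 1 ∧ v.2.val = s 1 then 1 else 0)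
        + (if v.1.val = b - 1 ∧ v.2.val = 0 then 1 else 0)
        + (if 1 ≤ v.1.val ∧ v.1.val ≤ b - 1 ∧ 1 ≤ v.2.val ∧ v.2.val ≤ s v.1.val - 1
            then 1 else 0) := by
  unfold ydeg
  rw [Finsupp.add_apply, Finsupp.add_apply, Finset.sum_apply']
  congr 1
  · congr 1
    · -- single (zidx 1 (s 1)) 1 at v
      by_cases hb1m : 1 ≤ m
      · have hv := valy hs2 le_rfl (by omega : 1 ≤ m + 1)
        rw [Finsupp.single_apply]
        refine if_congr ?_ rfl rfl
        rw [show (zidx m s 1 (s 1) = v) ↔ (v = zidx m s 1 (s 1)) from eq_comm,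
          eq_zidx_iff m s hv.1 hv.2]
      · -- m = 0 : then b = 1, degenerate; still need the identity
        have hm0 : m = 0 := by omega
        subst hm0
        have hv := valy hs2 le_rfl le_rfl
        rw [Finsupp.single_apply]
        refine if_congr ?_ rfl rfl
        rw [show (zidx 0 s 1 (s 1) = v) ↔ (v = zidx 0 s 1 (s 1)) from eq_comm,
          eq_zidx_iff 0 s hv.1 hv.2]
    · have hv : b - 1 < m + 2 ∧ 0 < nj m s (b - 1) := valx (by omega)
      rw [Finsupp.single_apply]
      refine if_congr ?_ rfl rfl
      rw [show (zidx m s (b-1) 0 = v) ↔ (v = zidx m s (b-1) 0) from eq_comm,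
        eq_zidx_iff m s hv.1 hv.2]
  · -- ∑ t ∈ Icc 1 (b-1), wdeg t v
    have hterm : ∀ t ∈ Finset.Icc 1 (b - 1), wdeg m s t v
        = if v.1.val = t ∧ 1 ≤ v.2.val ∧ v.2.val ≤ s t - 1 then 1 else 0 := by
      intro t ht
      rw [Finset.mem_Icc] at ht
      exact wdeg_apply hs1 ht.1 (by omega) v
    rw [Finset.sum_congr rfl hterm]
    by_cases hQ : 1 ≤ v.2.val ∧ v.2.val ≤ s v.1.val - 1
    · have : ∀ t ∈ Finset.Icc 1 (b - 1),
          (if v.1.val = t ∧ 1 ≤ v.2.val ∧ v.2.val ≤ s t - 1 then (1:ℕ) else 0)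
            = if t = v.1.val then 1 else 0 := by
        intro t _
        refine if_congr ?_ rfl rfl
        constructor
        · rintro ⟨h, _⟩; exact h.symm
        · rintro h; exact ⟨h.symm, h ▸ hQ⟩
      rw [Finset.sum_congr rfl this,
        Finset.sum_ite_eq' (Finset.Icc 1 (b - 1)) v.1.val (fun _ => (1:ℕ))]
      by_cases hmem : 1 ≤ v.1.val ∧ v.1.val ≤ b - 1
      · rw [if_pos (Finset.mem_Icc.2 hmem), if_pos ⟨hmem.1, hmem.2, hQ⟩]
      · rw [if_neg (fun h => hmem (Finset.mem_Icc.1 h)), if_neg (by tauto)]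
    · rw [Finset.sum_eq_zero, if_neg (by tauto)]
      intro t _
      rw [if_neg]
      rintro ⟨h1, h2⟩
      exact hQ (h1 ▸ h2)

variable {m s} in
lemma wmap_apply (v x : ZIdx m s) :
    wmap m s v x = if 1 ≤ v.1.val ∧ v.2.val = s v.1.val then ydeg m s v.1.val x
      else (if v = x then 1 else 0) := by
  unfold wmap
  by_cases h : 1 ≤ v.1.val ∧ v.2.val = s v.1.val
  · rw [if_pos h, if_pos h]
  · rw [if_neg h, if_neg h]
    exact Finsupp.single_apply

section Wlemmas

variable {m s}

lemma ydeg_apply' (hs1 : ∀ t, 1 ≤ t → t ≤ m → 1 ≤ s t) (hs2 : s (m + 1) = 0) {b : ℕ}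
    (hb1 : 1 ≤ b) (hb2 : b ≤ m + 1) {i j : ℕ} (hi : i < m + 2) (hj : j < nj m s i) :
    ydeg m s b (zidx m s i j)
      = (if i = 1 ∧ j = s 1 then 1 else 0)
        + (if i = b - 1 ∧ j = 0 then 1 else 0)
        + (if 1 ≤ i ∧ i ≤ b - 1 ∧ 1 ≤ j ∧ j ≤ s i - 1 then 1 else 0) := by
  rw [ydeg_apply hs1 hs2 hb1 hb2 (zidx m s i j), zidx_eq m s hi hj]

lemma W1 (hs1 : ∀ t, 1 ≤ t → t ≤ m → 1 ≤ s t) (hs2 : s (m + 1) = 0) {k : ℕ}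
    (hk : k ≤ m) (v : ZIdx m s) :
    wmap m s v (zidx m s k 0)
      = (if v = zidx m s k 0 then 1 else 0)
        + (if v = zidx m s (k + 1) (s (k + 1)) then 1 else 0) := by
  have hvx : k < m + 2 ∧ 0 < nj m s k := valx (by omega)
  have hvy := valy hs2 (Nat.le_add_left 1 k) (by omega : k + 1 ≤ m + 1)
  rw [wmap_apply]
  by_cases h : 1 ≤ v.1.val ∧ v.2.val = s v.1.val
  · rw [if_pos h, ydeg_apply' hs1 hs2 h.1 (by omega : v.1.val ≤ m + 1) hvx.1 hvx.2]
    have e1 : ¬(k = 1 ∧ (0 : ℕ) = s 1) := by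
      rintro ⟨hk1, h0⟩
      have := hs1 1 le_rfl (by omega)
      omega
    have e2 : ¬(v = zidx m s k 0) := by
      intro hv
      obtain ⟨h1, h2⟩ := (eq_zidx_iff m s hvx.1 hvx.2).1 hv
      have hsk := hs1 v.1.val h.1 (by omega)
      have h3 := h.2.trans (congrArg s h1)
      omega
    rw [if_neg e1, if_neg (fun hh : 1 ≤ k ∧ k ≤ v.1.val - 1 ∧ 1 ≤ (0:ℕ) ∧
      (0:ℕ) ≤ s k - 1 => by omega), if_neg e2]
    by_cases h4 : v.1.val = k + 1
    · rw [if_pos (show k = v.1.val - 1 ∧ (0:ℕ) = 0 from by omega),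
        if_pos ((eq_zidx_iff m s hvy.1 hvy.2).2 ⟨h4, h.2.trans (congrArg s h4)⟩)]
    · rw [if_neg (fun hh : k = v.1.val - 1 ∧ (0:ℕ) = 0 => by omega),
        if_neg (fun hh => h4 ((eq_zidx_iff m s hvy.1 hvy.2).1 hh).1)]
  · rw [if_neg h]
    have e4 : ¬(v = zidx m s (k + 1) (s (k + 1))) := by
      intro hv
      obtain ⟨h1, h2⟩ := (eq_zidx_iff m s hvy.1 hvy.2).1 hv
      exact h ⟨by omega, h2.trans (congrArg s h1.symm)⟩
    rw [if_neg e4, add_zero]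

lemma W2 (hs1 : ∀ t, 1 ≤ t → t ≤ m → 1 ≤ s t) (hs2 : s (m + 1) = 0) (hm : 1 ≤ m)
    (v : ZIdx m s) :
    wmap m s v (zidx m s 1 (s 1))
      = (if 1 ≤ v.1.val ∧ v.2.val = s v.1.val then 1 else 0) := by
  have hs1' := hs1 1 le_rfl hm
  have hvy := valy hs2 le_rfl (by omega : 1 ≤ m + 1)
  rw [wmap_apply]
  by_cases h : 1 ≤ v.1.val ∧ v.2.val = s v.1.val
  · rw [if_pos h, if_pos h, ydeg_apply' hs1 hs2 h.1 (by omega : v.1.val ≤ m + 1)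
      hvy.1 hvy.2]
    rw [if_pos ⟨rfl, rfl⟩, if_neg (fun hh : (1:ℕ) = v.1.val - 1 ∧ s 1 = 0 => by omega),
      if_neg (fun hh : 1 ≤ (1:ℕ) ∧ 1 ≤ v.1.val - 1 ∧ 1 ≤ s 1 ∧ s 1 ≤ s 1 - 1 => by omega)]
  · rw [if_neg h, if_neg h, if_neg]
    intro hv
    obtain ⟨h1, h2⟩ := (eq_zidx_iff m s hvy.1 hvy.2).1 hv
    exact h ⟨by omega, h2.trans (congrArg s h1.symm)⟩

lemma W3 (hs1 : ∀ t, 1 ≤ t → t ≤ m → 1 ≤ s t) (hs2 : s (m + 1) = 0) {t u : ℕ}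
    (ht1 : 1 ≤ t) (ht2 : t ≤ m) (hu1 : 1 ≤ u) (hu2 : u ≤ s t - 1)
    (v : ZIdx m s) :
    wmap m s v (zidx m s t u)
      = (if v = zidx m s t u then 1 else 0)
        + (if t + 1 ≤ v.1.val ∧ v.2.val = s v.1.val then 1 else 0) := by
  have hst := hs1 t ht1 ht2
  have hvv := valv ht1 ht2 hu2 hst
  rw [wmap_apply]
  by_cases h : 1 ≤ v.1.val ∧ v.2.val = s v.1.val
  · rw [if_pos h, ydeg_apply' hs1 hs2 h.1 (by omega : v.1.val ≤ m + 1) hvv.1 hvv.2]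
    have e1 : ¬(t = 1 ∧ u = s 1) := by rintro ⟨rfl, h2⟩; omega
    have e2 : ¬(v = zidx m s t u) := by
      intro hv
      obtain ⟨h1, h2⟩ := (eq_zidx_iff m s hvv.1 hvv.2).1 hv
      have h3 := h.2.trans (congrArg s h1)
      omega
    rw [if_neg e1, if_neg (fun hh : t = v.1.val - 1 ∧ u = 0 => by omega), if_neg e2]
    by_cases h4 : t + 1 ≤ v.1.val
    · rw [if_pos (show 1 ≤ t ∧ t ≤ v.1.val - 1 ∧ 1 ≤ u ∧ u ≤ s t - 1 from by omega),
        if_pos ⟨h4, h.2⟩]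
    · rw [if_neg (fun hh : 1 ≤ t ∧ t ≤ v.1.val - 1 ∧ 1 ≤ u ∧ u ≤ s t - 1 => by omega),
        if_neg (fun hh : t + 1 ≤ v.1.val ∧ v.2.val = s v.1.val => h4 hh.1)]
  · rw [if_neg h, if_neg (fun hh : t + 1 ≤ v.1.val ∧ v.2.val = s v.1.val =>
      h ⟨by omega, hh.2⟩), add_zero]

lemma sumDelta (d : ZIdx m s →₀ ℕ) (x0 : ZIdx m s) :
    (∑ v : ZIdx m s, d v * (if v = x0 then 1 else 0)) = d x0 := by
  have : ∀ v : ZIdx m s, d v * (if v = x0 then 1 else 0)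
      = if v = x0 then d v else 0 := by
    intro v; split_ifs <;> simp
  rw [Finset.sum_congr rfl fun v _ => this v,
    Finset.sum_ite_eq' Finset.univ x0 (fun v => d v), if_pos (Finset.mem_univ x0)]

lemma sumY (hs2 : s (m + 1) = 0) (c : ℕ) (hc : 1 ≤ c) (d : ZIdx m s →₀ ℕ) :
    (∑ v : ZIdx m s, d v * (if c ≤ v.1.val ∧ v.2.val = s v.1.val then 1 else 0))
      = ∑ b ∈ Finset.Icc c (m + 1), d (zidx m s b (s b)) := by
  rw [← Finset.univ_sigma_univ, Finset.sum_sigma]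
  have hinner : ∀ i : Fin (m + 2), (∑ j : Fin (nj m s i.val),
      d ⟨i, j⟩ * (if c ≤ (⟨i, j⟩ : ZIdx m s).1.val ∧ (⟨i, j⟩ : ZIdx m s).2.val
        = s (⟨i, j⟩ : ZIdx m s).1.val then 1 else 0))
      = if c ≤ i.val then d (zidx m s i.val (s i.val)) else 0 := by
    intro i
    by_cases hci : c ≤ i.val
    · have hvi : i.val < m + 2 ∧ s i.val < nj m s i.val :=
        valy hs2 (le_trans hc hci) (by omega)
      rw [if_pos hci]
      have hterm : ∀ j : Fin (nj m s i.val),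
          d ⟨i, j⟩ * (if c ≤ i.val ∧ j.val = s i.val then 1 else 0)
            = if j = (⟨s i.val, hvi.2⟩ : Fin (nj m s i.val)) then d ⟨i, j⟩ else 0 := by
        intro j
        by_cases hj : j.val = s i.val
        · rw [if_pos ⟨hci, hj⟩, if_pos (Fin.ext hj), mul_one]
        · rw [if_neg (fun hh => hj hh.2), if_neg (fun hh => hj (by rw [hh])), mul_zero]
      rw [Finset.sum_congr rfl fun j _ => hterm j,
        Finset.sum_ite_eq' Finset.univ _ (fun j => d ⟨i, j⟩), if_pos (Finset.mem_univ _)]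
      congr 1
      rw [zidx_eq m s hvi.1 hvi.2]
    · rw [if_neg hci]
      exact Finset.sum_eq_zero fun j _ => by rw [if_neg (fun hh => hci hh.1), mul_zero]
  rw [Finset.sum_congr rfl fun i _ => hinner i,
    Fin.sum_univ_eq_sum_range (fun i => if c ≤ i then d (zidx m s i (s i)) else 0) (m + 2)]
  have hsub : Finset.Icc c (m + 1) ⊆ Finset.range (m + 2) := by
    intro x hx; rw [Finset.mem_Icc] at hx; exact Finset.mem_range.2 (by omega)
  have hzero : ∀ x ∈ Finset.range (m + 2), x ∉ Finset.Icc c (m + 1) →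
      (if c ≤ x then d (zidx m s x (s x)) else 0) = 0 := by
    intro x hx hnx
    rw [Finset.mem_range] at hx
    rw [if_neg]
    intro hcx
    exact hnx (Finset.mem_Icc.2 ⟨hcx, by omega⟩)
  rw [← Finset.sum_subset hsub hzero]
  exact Finset.sum_congr rfl fun x hx => if_pos (Finset.mem_Icc.1 hx).1

end Wlemmas

noncomputable def Sy (d : ZIdx m s →₀ ℕ) (t : ℕ) : ℕ :=
  ∑ b ∈ Finset.Icc (t + 1) (m + 1), d (zidx m s b (s b))

section Coord

variable {m s}

lemma C1 (hs1 : ∀ t, 1 ≤ t → t ≤ m → 1 ≤ s t) (hs2 : s (m + 1) = 0) {k : ℕ} (hk : k ≤ m) (d : ZIdx m s →₀ ℕ) :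
    Tm m s d (zidx m s k 0)
      = d (zidx m s k 0) + d (zidx m s (k + 1) (s (k + 1))) := by
  rw [Tm_apply, Finset.sum_congr rfl fun v _ => by rw [W1 hs1 hs2 hk v]]
  have : ∀ v : ZIdx m s, d v * ((if v = zidx m s k 0 then 1 else 0)
      + (if v = zidx m s (k + 1) (s (k + 1)) then 1 else 0))
      = d v * (if v = zidx m s k 0 then 1 else 0)
        + d v * (if v = zidx m s (k + 1) (s (k + 1)) then 1 else 0) := fun v => mul_add _ _ _
  rw [Finset.sum_congr rfl fun v _ => this v, Finset.sum_add_distrib,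
    sumDelta, sumDelta]

lemma C2 (hs1 : ∀ t, 1 ≤ t → t ≤ m → 1 ≤ s t) (hs2 : s (m + 1) = 0) (hm : 1 ≤ m) (d : ZIdx m s →₀ ℕ) :
    Tm m s d (zidx m s 1 (s 1)) = Sy m s d 0 := by
  rw [Tm_apply, Finset.sum_congr rfl fun v _ => by rw [W2 hs1 hs2 hm v]]
  exact sumY hs2 1 le_rfl d

lemma C3 (hs1 : ∀ t, 1 ≤ t → t ≤ m → 1 ≤ s t) (hs2 : s (m + 1) = 0) {t u : ℕ} (ht1 : 1 ≤ t) (ht2 : t ≤ m) (hu1 : 1 ≤ u) (hu2 : u ≤ s t - 1)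
    (d : ZIdx m s →₀ ℕ) :
    Tm m s d (zidx m s t u) = d (zidx m s t u) + Sy m s d t := by
  rw [Tm_apply, Finset.sum_congr rfl fun v _ => by rw [W3 hs1 hs2 ht1 ht2 hu1 hu2 v]]
  have : ∀ v : ZIdx m s, d v * ((if v = zidx m s t u then 1 else 0)
      + (if t + 1 ≤ v.1.val ∧ v.2.val = s v.1.val then 1 else 0))
      = d v * (if v = zidx m s t u then 1 else 0)
        + d v * (if t + 1 ≤ v.1.val ∧ v.2.val = s v.1.val then 1 else 0) :=
    fun v => mul_add _ _ _
  rw [Finset.sum_congr rfl fun v _ => this v, Finset.sum_add_distrib, sumDelta,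
    sumY hs2 (t + 1) (by omega) d]
  rfl

lemma Sy_split {t : ℕ} (ht : t ≤ m) (d : ZIdx m s →₀ ℕ) :
    Sy m s d t = d (zidx m s (t + 1) (s (t + 1))) + Sy m s d (t + 1) := by
  unfold Sy
  rw [Finset.Icc_add_one_left_eq_Ioc, Finset.Icc_add_one_left_eq_Ioc,
    ← Finset.sum_Ioc_consecutive _ (by omega : t ≤ t + 1) (by omega : t + 1 ≤ m + 1)]
  congr 1
  rw [Nat.Ioc_succ_singleton]
  exact Finset.sum_singleton _ _

lemma Sy_zero {t : ℕ} (ht : m < t) (d : ZIdx m s →₀ ℕ) : Sy m s d t = 0 := by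
  unfold Sy
  rw [Finset.Icc_eq_empty (by omega), Finset.sum_empty]

lemma core {d e : ZIdx m s →₀ ℕ} (hd : Normal m s d)
    (hE : ∀ k, k ≤ m → d (zidx m s k 0) + d (zidx m s (k + 1) (s (k + 1)))
      = e (zidx m s k 0) + e (zidx m s (k + 1) (s (k + 1))))
    {k : ℕ} (hk1 : 1 ≤ k) (hk2 : k ≤ m)
    (hprev : ∀ t, t < k → Sy m s d t = Sy m s e t)
    (hlt : Sy m s e k < Sy m s d k) : False := by
  obtain ⟨k', rfl⟩ : ∃ k', k = k' + 1 := ⟨k - 1, by omega⟩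
  have h1 : Sy m s d k' = Sy m s e k' := hprev k' (by omega)
  have h2 := Sy_split (by omega : k' ≤ m) d
  have h3 := Sy_split (by omega : k' ≤ m) e
  have hdx : d (zidx m s k' 0) ≠ 0 := by
    have h4 := hE k' (by omega)
    omega
  set F := (Finset.Icc (k' + 1) m).filter (fun t' => Sy m s e t' < Sy m s d t') with hF
  have hFne : F.Nonempty :=
    ⟨k' + 1, Finset.mem_filter.2 ⟨Finset.mem_Icc.2 ⟨le_rfl, hk2⟩, hlt⟩⟩
  set p := F.max' hFne with hpdef
  have hp : p ∈ F := F.max'_mem hFne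
  rw [hF, Finset.mem_filter, Finset.mem_Icc] at hp
  have hnext : Sy m s d (p + 1) ≤ Sy m s e (p + 1) := by
    by_cases hpm : p = m
    · rw [hpm, Sy_zero (by omega), Sy_zero (by omega)]
    · by_contra hcon
      push_neg at hcon
      have hmem : p + 1 ∈ F :=
        Finset.mem_filter.2 ⟨Finset.mem_Icc.2 ⟨by omega, by omega⟩, hcon⟩
      have hle : p + 1 ≤ p := F.le_max' _ hmem
      omega
  have h5 := Sy_split (by omega : p ≤ m) d
  have h6 := Sy_split (by omega : p ≤ m) e
  have hQp : d (zidx m s (p + 1) (s (p + 1))) ≠ 0 := by omega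
  have := hd k' (p + 1) (by omega) (by omega) (by omega) hdx hQp
  omega

end Coord

variable {m s} in
lemma Tinj (hs1 : ∀ t, 1 ≤ t → t ≤ m → 1 ≤ s t) (hs2 : s (m + 1) = 0) (hm : 1 ≤ m)
    {d e : ZIdx m s →₀ ℕ} (hd : Normal m s d) (he : Normal m s e)
    (hT : Tm m s d = Tm m s e) : d = e := by
  have hE : ∀ k, k ≤ m → d (zidx m s k 0) + d (zidx m s (k + 1) (s (k + 1)))
      = e (zidx m s k 0) + e (zidx m s (k + 1) (s (k + 1))) := by
    intro k hk
    rw [← C1 hs1 hs2 hk d, ← C1 hs1 hs2 hk e, hT]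
  have hS0 : Sy m s d 0 = Sy m s e 0 := by
    rw [← C2 hs1 hs2 hm d, ← C2 hs1 hs2 hm e, hT]
  have hSall : ∀ t, Sy m s d t = Sy m s e t := by
    intro t
    induction t using Nat.strong_induction_on with
    | _ t IH =>
    rcases Nat.eq_zero_or_pos t with ht0 | ht0
    · exact ht0 ▸ hS0
    by_cases htm : t ≤ m
    · rcases lt_trichotomy (Sy m s d t) (Sy m s e t) with h | h | h
      · exact absurd h (by
          intro hlt
          exact core he (fun k hk => (hE k hk).symm) ht0 htm
            (fun t' ht' => (IH t' ht').symm) hlt)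
      · exact h
      · exact absurd h (by
          intro hlt
          exact core hd hE ht0 htm IH hlt)
    · rw [Sy_zero (by omega), Sy_zero (by omega)]
  have hQ : ∀ b, 1 ≤ b → b ≤ m + 1 → d (zidx m s b (s b)) = e (zidx m s b (s b)) := by
    intro b hb1 hb2
    obtain ⟨b', rfl⟩ : ∃ b', b = b' + 1 := ⟨b - 1, by omega⟩
    have h2 := Sy_split (by omega : b' ≤ m) d
    have h3 := Sy_split (by omega : b' ≤ m) e
    have h4 := hSall b'
    have h5 := hSall (b' + 1)
    omega
  have hP : ∀ k, k ≤ m → d (zidx m s k 0) = e (zidx m s k 0) := by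
    intro k hk
    have h1 := hE k hk
    have h2 := hQ (k + 1) (by omega) (by omega)
    omega
  have hR : ∀ t u, 1 ≤ t → t ≤ m → 1 ≤ u → u ≤ s t - 1 →
      d (zidx m s t u) = e (zidx m s t u) := by
    intro t u ht1 ht2 hu1 hu2
    have h1 := C3 hs1 hs2 ht1 ht2 hu1 hu2 d
    have h2 := C3 hs1 hs2 ht1 ht2 hu1 hu2 e
    rw [hT] at h1
    have h3 := hSall t
    omega
  ext v
  obtain ⟨⟨i, hi⟩, ⟨j, hj⟩⟩ := v
  have hj' : j < nj m s i := hj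
  have hv : (⟨⟨i, hi⟩, ⟨j, hj⟩⟩ : ZIdx m s) = zidx m s i j := (zidx_eq m s hi hj').symm
  rw [hv]
  by_cases hi0 : i = 0
  · subst hi0
    have hj0 : j = 0 := by
      have : nj m s 0 = 1 := by unfold nj; simp
      omega
    subst hj0
    exact hP 0 (by omega)
  by_cases him : i = m + 1
  · subst him
    have hj0 : j = 0 := by
      have : nj m s (m + 1) = 1 := by unfold nj; simp
      omega
    subst hj0
    have := hQ (m + 1) (by omega) le_rfl
    rw [hs2] at this
    exact this
  have hile : i ≤ m := by omega
  have hjle : j ≤ s i := by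
    have := nj_mid m s hi0 him
    omega
  by_cases hj0 : j = 0
  · subst hj0; exact hP i hile
  by_cases hjs : j = s i
  · subst hjs; exact hQ i (by omega) (by omega)
  · exact hR i j (by omega) hile (by omega) (by omega)

variable {m s} in
lemma normal_inj (hs1 : ∀ t, 1 ≤ t → t ≤ m → 1 ≤ s t) (hs2 : s (m + 1) = 0) (hm : 1 ≤ m)
    (g : CZ m s) (hg : ∀ d ∈ g.support, Normal m s d)
    (h0 : phi m s g = 0) : g = 0 := by
  by_contra hne
  obtain ⟨d0, hd0⟩ := Finset.nonempty_iff_ne_empty.2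
    (fun h => hne (MvPolynomial.support_eq_empty.1 h))
  have hphi : phi m s g = ∑ d ∈ g.support, monomial (Tm m s d) (coeff d g) := by
    conv_lhs => rw [g.as_sum]
    rw [map_sum]
    exact Finset.sum_congr rfl fun d _ => phi_monomial m s d (coeff d g)
  have hc : coeff d0 g = 0 := by
    have h1 : coeff (Tm m s d0) (phi m s g) = coeff d0 g := by
      rw [hphi, MvPolynomial.coeff_sum]
      rw [Finset.sum_eq_single d0]
      · rw [coeff_monomial, if_pos rfl]
      · intro d hd hne'
        rw [coeff_monomial, if_neg]
        intro heq
        exact hne' (Tinj hs1 hs2 hm (hg d hd) (hg d0 hd0) heq)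
      · intro hd; exact absurd hd0 hd
    rw [h0] at h1
    simpa using h1.symm
  exact (MvPolynomial.mem_support_iff.1 hd0) hc

variable {m s} in
lemma phi_qdet (hs1 : ∀ t, 1 ≤ t → t ≤ m → 1 ≤ s t) (hs2 : s (m + 1) = 0) {f : CZ m s}
    (hf : f ∈ QDet m s) : phi m s f = 0 := by
  have hle : QDet m s ≤ RingHom.ker (phi m s).toRingHom := by
    rw [QDet, Ideal.span_le]
    rintro q ⟨i, j, h1, h2, h3, rfl⟩
    exact RingHom.mem_ker.mpr (phi_qm hs1 hs2 h1 h2 h3)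
  exact RingHom.mem_ker.mp (hle hf)

variable {m s} in
lemma mem_qdet_of_phi (hs1 : ∀ t, 1 ≤ t → t ≤ m → 1 ≤ s t) (hs2 : s (m + 1) = 0)
    (hm : 1 ≤ m) {f : CZ m s} (hf : phi m s f = 0) : f ∈ QDet m s := by
  obtain ⟨g, hfg, hgn⟩ := reduce_poly hs1 hs2 f
  have hpg : phi m s g = 0 := by
    have h1 := phi_qdet hs1 hs2 hfg
    rw [map_sub, hf, zero_sub, neg_eq_zero] at h1
    exact h1
  have hg0 : g = 0 := normal_inj hs1 hs2 hm g hgn hpg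
  rw [hg0, sub_zero] at hfg
  exact hfg

end QDP

/-- the quotient ring `ℂ[𝗓]/QDet(𝗓)` is an integral domain. -/
theorem quotient_by_QDet_isDomain
    (m : ℕ) (hm : 1 ≤ m) (β : ℕ → ℕ) (hβ : ∀ t, 1 ≤ t → t ≤ m → 2 ≤ β t) :
    IsDomain (CZ m (sfun m β) ⧸ QDet m (sfun m β)) := by
  set s := sfun m β with hs
  have hs1 : ∀ t, 1 ≤ t → t ≤ m → 1 ≤ s t := by
    intro t h1 h2
    have := hβ t h1 h2
    simp only [hs, sfun, if_pos h2]
    omega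
  have hs2 : s (m + 1) = 0 := by
    simp only [hs, sfun, if_neg (by omega : ¬(m + 1 ≤ m))]
  have hker : ∀ f ∈ QDet m s, (QDP.phi m s).toRingHom f = 0 := fun f hf =>
    QDP.phi_qdet hs1 hs2 hf
  let ψ : (CZ m s ⧸ QDet m s) →+* CZ m s :=
    Ideal.Quotient.lift (QDet m s) (QDP.phi m s).toRingHom hker
  have hinj : Function.Injective ψ := by
    apply RingHom.lift_injective_of_ker_le_ideal (QDet m s) hker
    intro f hf
    exact QDP.mem_qdet_of_phi hs1 hs2 hm (RingHom.mem_ker.mp hf)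
  exact Function.Injective.isDomain ψ hinj
end

section
/- Let R := ℂ[c, a, k]/(c·k − c·a²). Then the localization of R at the maximal ideal generated by the classes of c, a, k is a Noetherian local ring of Krull dimension 2 whose maximal ideal cannot be generated by 2 elements; in particular this local ring is not regular. (R is the coordinate ring of the chart U_0 = (a_1 ≠ 0) of Rep(A_{3,1,0}, δ)//_{ϑ₂}GL for the group 1/3(1,1) with the generic stability condition ϑ₂ = (1,−1); its singularity shows that for stability parameters other than ϑ = (−n,1,…,1) the simultaneous resolution of Theorem 5.10 can fail.) -/
open MvPolynomial

/-- The coordinate ring `R = ℂ[c,a,k]/(c·k − c·a²)` of the chart `U_0 = (a_1 ≠ 0)` of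
`Rep(A_{3,1,0}, δ)//_{ϑ₂}GL` for the group `1/3(1,1)` with the generic stability condition
`ϑ₂ = (1,−1)`.  The variables `c, a, k` are `X 0, X 1, X 2`. -/
noncomputable abbrev chartRing : Type :=
  MvPolynomial (Fin 3) ℂ ⧸
    Ideal.span {(X 0 * X 2 - X 0 * X 1 ^ 2 : MvPolynomial (Fin 3) ℂ)}

/-- The ideal of `R` generated by the classes of `c`, `a`, `k`, corresponding to the origin
of the hypersurface `{ck = ca²} ⊂ 𝔸³`. -/
noncomputable def originIdeal : Ideal chartRing :=
  Ideal.span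
    {Ideal.Quotient.mk _ (X 0), Ideal.Quotient.mk _ (X 1), Ideal.Quotient.mk _ (X 2)}

noncomputable abbrev P3 : Type := MvPolynomial (Fin 3) ℂ
noncomputable abbrev Amod : Type := MvPolynomial PUnit (Polynomial ℂ)


lemma no_three_chain_pid {D : Type*} [CommRing D] [IsDomain D] [IsPrincipalIdealRing D]
    {a b c : Ideal D} (hb : b.IsPrime) (hc : c.IsPrime) (h1 : a < b) (h2 : b < c) : False := by
  have hbbot : b ≠ ⊥ := fun h => by
    rw [h] at h1; exact (not_lt_bot h1)
  haveI := hb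
  have hbmax : b.IsMaximal := IsPrime.to_maximal_ideal (hpi := hb) hbbot
  exact hc.ne_top (hbmax.1.2 c h2)

lemma descent {A : Type*} [CommRing A] [IsDomain A] [UniqueFactorizationMonoid A]
    {q : Ideal A} (hq : q.IsPrime) {g : A} (hg : Prime g) (hgq : g ∉ q)
    (hle : q ≤ Ideal.span {g}) : q = ⊥ := by
  by_contra hb
  obtain ⟨h, hhq, hh0⟩ := Submodule.exists_mem_ne_zero_of_ne_bot hb
  have key : ∀ n : ℕ, ∃ t, t ∈ q ∧ h = g ^ n * t := by
    intro n
    induction n with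
    | zero => exact ⟨h, hhq, by simp⟩
    | succ n ih =>
        obtain ⟨t, htq, hht⟩ := ih
        obtain ⟨u, hu⟩ := Ideal.mem_span_singleton'.mp (hle htq)
        have hut : u ∈ q := by
          have : g * u ∈ q := by rw [mul_comm, hu]; exact htq
          exact (hq.mem_or_mem this).resolve_left hgq
        exact ⟨u, hut, by rw [hht, ← hu, pow_succ]; ring⟩
  obtain ⟨n, hn⟩ := FiniteMultiplicity.of_prime_left hg hh0
  obtain ⟨t, _, ht⟩ := key (n + 1)
  exact hn ⟨t, ht⟩

lemma map_lt_map_of_surjective {A B : Type*} [CommRing A] [CommRing B] (π : A →+* B)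
    (hπ : Function.Surjective π) {I J : Ideal A} (hker : RingHom.ker π ≤ I) (h : I < J) :
    Ideal.map π I < Ideal.map π J := by
  refine lt_of_le_of_ne (Ideal.map_mono h.le) fun e => h.ne ?_
  have hI := Ideal.comap_map_of_surjective π hπ I
  have hJ := Ideal.comap_map_of_surjective π hπ J
  have hck : Ideal.comap π ⊥ = RingHom.ker π := rfl
  calc I = I ⊔ RingHom.ker π := (sup_eq_left.mpr hker).symm
    _ = Ideal.comap π (Ideal.map π I) := by rw [hI]; rfl
    _ = Ideal.comap π (Ideal.map π J) := by rw [e]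
    _ = J ⊔ RingHom.ker π := by rw [hJ]; rfl
    _ = J := sup_eq_left.mpr (le_trans hker h.le)

lemma comap_lt_comap_of_surjective {A B : Type*} [CommRing A] [CommRing B] (π : A →+* B)
    (hπ : Function.Surjective π) {I J : Ideal B} (h : I < J) :
    Ideal.comap π I < Ideal.comap π J := by
  refine lt_of_le_of_ne (Ideal.comap_mono h.le) fun e => h.ne ?_
  have hI := Ideal.map_comap_of_surjective π hπ I
  have hJ := Ideal.map_comap_of_surjective π hπ J
  rw [← hI, ← hJ, e]

-- PID instance for MvPolynomial PUnit over a field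
lemma pid_punit_mv (F : Type*) [Field F] : IsPrincipalIdealRing (MvPolynomial PUnit F) :=
  IsPrincipalIdealRing.of_surjective ((pUnitAlgEquiv F).symm : Polynomial F →ₐ[F] MvPolynomial PUnit F).toRingHom
    (pUnitAlgEquiv F).symm.surjective

attribute [local instance] MvPolynomial.algebraMvPolynomial

lemma amod_no_four_chain {q0 q1 q2 q3 : Ideal Amod}
    (h0 : q0.IsPrime) (h1 : q1.IsPrime) (h2 : q2.IsPrime) (h3 : q3.IsPrime)
    (l01 : q0 < q1) (l12 : q1 < q2) (l23 : q2 < q3) : False := by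
  classical
  set t2 : Ideal (Polynomial ℂ) := Ideal.comap (C : Polynomial ℂ →+* Amod) q2 with ht2
  by_cases hbot : t2 = ⊥
  · -- localization case: q0 ⊊ q1 ⊊ q2 all disjoint from nonzero constants
    set K := FractionRing (Polynomial ℂ)
    set M : Submonoid Amod := (nonZeroDivisors (Polynomial ℂ)).map (C (σ := PUnit)) with hM
    haveI : IsLocalization M (MvPolynomial PUnit K) := MvPolynomial.isLocalization _ _
    haveI : IsPrincipalIdealRing (MvPolynomial PUnit K) := pid_punit_mv K
    have disj : ∀ q : Ideal Amod, q ≤ q2 → Disjoint (M : Set Amod) (q : Set Amod) := by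
      intro q hq
      rw [Set.disjoint_left]
      rintro x ⟨s, hs, rfl⟩ hxq
      have : s ∈ t2 := hq hxq
      rw [hbot] at this
      simp only [Ideal.mem_bot] at this
      exact nonZeroDivisors.ne_zero hs this
    let e := IsLocalization.orderIsoOfPrime M (MvPolynomial PUnit K)
    let s0 := e.symm ⟨q0, h0, disj q0 (le_trans l01.le l12.le)⟩
    let s1 := e.symm ⟨q1, h1, disj q1 l12.le⟩
    let s2 := e.symm ⟨q2, h2, disj q2 le_rfl⟩
    have hl1 : s0 < s1 := e.symm.lt_iff_lt.mpr (by exact l01)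
    have hl2 : s1 < s2 := e.symm.lt_iff_lt.mpr (by exact l12)
    exact no_three_chain_pid s1.2 s2.2 hl1 hl2
  · -- quotient case
    haveI : t2.IsPrime := Ideal.comap_isPrime _ _
    have hprin : Submodule.IsPrincipal t2 := IsPrincipalIdealRing.principal t2
    obtain ⟨p, hp⟩ : ∃ p, t2 = Ideal.span {p} := ⟨hprin.generator, (Ideal.span_singleton_generator t2).symm⟩
    have hp0 : p ≠ 0 := fun h => hbot (by simp [hp, h])
    have hpprime : Prime p := (Ideal.span_singleton_prime hp0).mp (hp ▸ inferInstance)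
    haveI hpmax : (Ideal.span {p}).IsMaximal :=
      PrincipalIdealRing.isMaximal_of_irreducible hpprime.irreducible
    set L := Polynomial ℂ ⧸ Ideal.span {p} with hL
    letI : Field L := Ideal.Quotient.field _
    haveI : IsPrincipalIdealRing (MvPolynomial PUnit L) := pid_punit_mv L
    set J : Ideal Amod := Ideal.map (C : Polynomial ℂ →+* Amod) (Ideal.span {p}) with hJ
    have hCp2 : (C p : Amod) ∈ q2 := by
      have : p ∈ t2 := hp ▸ Ideal.subset_span rfl
      exact this
    have hJq2 : J ≤ q2 := by
      rw [hJ, Ideal.map_span, Set.image_singleton, Ideal.span_le, Set.singleton_subset_iff]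
      exact hCp2
    have hJspan : J = Ideal.span {(C p : Amod)} := by
      rw [hJ, Ideal.map_span, Set.image_singleton]
    have hCp0 : (C p : Amod) ≠ 0 := by
      simpa using hp0
    -- the quotient equivalence
    set EqL := MvPolynomial.quotientEquivQuotientMvPolynomial (σ := PUnit) (Ideal.span {p})
      with hEqL
    have hEqLsurj : Function.Surjective (EqL : MvPolynomial PUnit L →+* Amod ⧸ J) :=
      EqL.surjective
    -- J is prime, hence C p is prime
    haveI : IsDomain (Amod ⧸ J) :=
      Function.Injective.isDomain (EqL.symm : Amod ⧸ J →ₐ[Polynomial ℂ] MvPolynomial PUnit L).toRingHom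
        EqL.symm.injective
    have hJprime : J.IsPrime := (Ideal.Quotient.isDomain_iff_prime J).mp inferInstance
    have hCpPrime : Prime (C p : Amod) := by
      rw [hJspan] at hJprime
      exact (Ideal.span_singleton_prime hCp0).mp hJprime
    have hmkker : RingHom.ker (Ideal.Quotient.mk J) = J := Ideal.mk_ker
    have hJq3 : J ≤ q3 := le_trans hJq2 l23.le
    -- transfer of primes above J
    have transfer : ∀ {q : Ideal Amod}, q.IsPrime → J ≤ q →
        (Ideal.comap (EqL : MvPolynomial PUnit L →+* Amod ⧸ J)
          (Ideal.map (Ideal.Quotient.mk J) q)).IsPrime := by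
      intro q hq hle
      haveI : (Ideal.map (Ideal.Quotient.mk J) q).IsPrime :=
        Ideal.map_isPrime_of_surjective Ideal.Quotient.mk_surjective (hmkker.trans_le hle)
      exact Ideal.comap_isPrime _ _
    have transfer_lt : ∀ {q q' : Ideal Amod}, J ≤ q → q < q' →
        Ideal.comap (EqL : MvPolynomial PUnit L →+* Amod ⧸ J)
          (Ideal.map (Ideal.Quotient.mk J) q) <
        Ideal.comap (EqL : MvPolynomial PUnit L →+* Amod ⧸ J)
          (Ideal.map (Ideal.Quotient.mk J) q') := by
      intro q q' hle hlt
      have hmk : Function.Surjective (Ideal.Quotient.mk J) := Ideal.Quotient.mk_surjective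
      have hk : RingHom.ker (Ideal.Quotient.mk J) ≤ q := hmkker.trans_le hle
      have h1 := map_lt_map_of_surjective (A := Amod) (B := Amod ⧸ J) (Ideal.Quotient.mk J) hmk hk hlt
      have h2 := comap_lt_comap_of_surjective (EqL : MvPolynomial PUnit L →+* Amod ⧸ J) hEqLsurj h1
      exact h2
    by_cases hq1 : (C p : Amod) ∈ q1
    · have hJq1 : J ≤ q1 := by
        rw [hJspan, Ideal.span_le, Set.singleton_subset_iff]; exact hq1
      exact no_three_chain_pid (transfer h2 hJq2) (transfer h3 hJq3)
        (transfer_lt hJq1 l12) (transfer_lt hJq2 l23)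
    · have hq1bot : q1 ≠ ⊥ := (bot_le.trans_lt l01).ne'
      have hnotle : ¬ q1 ≤ J := fun hle =>
        hq1bot (descent h1 hCpPrime hq1 (by rw [← hJspan]; exact hle))
      obtain ⟨x, hxq1, hxJ⟩ := Set.not_subset.mp (fun h => hnotle h)
      have hr2bot : Ideal.comap (EqL : MvPolynomial PUnit L →+* Amod ⧸ J)
          (Ideal.map (Ideal.Quotient.mk J) q2) ≠ ⊥ := by
        intro hb
        have happ : (EqL : MvPolynomial PUnit L →+* Amod ⧸ J)
            (EqL.symm (Ideal.Quotient.mk J x)) = Ideal.Quotient.mk J x :=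
          EqL.apply_symm_apply _
        have hy : EqL.symm (Ideal.Quotient.mk J x) ∈
            Ideal.comap (EqL : MvPolynomial PUnit L →+* Amod ⧸ J)
              (Ideal.map (Ideal.Quotient.mk J) q2) := by
          rw [Ideal.mem_comap, happ]
          exact Ideal.mem_map_of_mem _ (l12.le hxq1)
        rw [hb, Ideal.mem_bot] at hy
        have hz : Ideal.Quotient.mk J x = 0 := by
          rw [← happ, hy, map_zero]
        exact hxJ (Ideal.Quotient.eq_zero_iff_mem.mp hz)
      exact no_three_chain_pid (transfer h2 hJq2) (transfer h3 hJq3)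
        (Ne.bot_lt' (Ne.symm hr2bot)) (transfer_lt hJq2 l23)


lemma sub_section_mem {Q : Type*} [CommRing Q] (I : Ideal P3)
    (φ : P3 →+* Q) (ψ : Q →+* P3)
    (hC : ∀ a : ℂ, ψ (φ (C a)) = C a)
    (hX : ∀ i, X i - ψ (φ (X i)) ∈ I) (g : P3) : g - ψ (φ g) ∈ I := by
  induction g using MvPolynomial.induction_on with
  | C a => simp [hC]
  | add p q hp hq =>
      have := I.add_mem hp hq
      have e : p + q - ψ (φ (p + q)) = (p - ψ (φ p)) + (q - ψ (φ q)) := by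
        rw [map_add, map_add]; ring
      rw [e]; exact this
  | mul_X p i hp =>
      have e : p * X i - ψ (φ (p * X i)) =
          p * (X i - ψ (φ (X i))) + ψ (φ (X i)) * (p - ψ (φ p)) := by
        rw [map_mul, map_mul]; ring
      rw [e]
      exact I.add_mem (I.mul_mem_left _ (hX i)) (I.mul_mem_left _ hp)

noncomputable def φ0 : P3 →ₐ[ℂ] Amod := aeval ![0, C Polynomial.X, X PUnit.unit]
noncomputable def ψ0 : Amod →+* P3 :=
  eval₂Hom (Polynomial.eval₂RingHom (C : ℂ →+* P3) (X 1)) (fun _ => X 2)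

lemma psi0_phi0_C (a : ℂ) : ψ0 (φ0 (C a)) = C a := by
  simp [φ0, ψ0, algebraMap_eq]

lemma phi0_surj : Function.Surjective φ0 := by
  intro t
  refine ⟨ψ0 t, ?_⟩
  have : (φ0.toRingHom.comp ψ0) t = RingHom.id Amod t := by
    congr 1
    apply MvPolynomial.ringHom_ext
    · intro q
      simp only [RingHom.comp_apply, RingHom.id_apply, ψ0, eval₂Hom_C]
      rw [Polynomial.coe_eval₂RingHom, Polynomial.hom_eval₂]
      have h1 : φ0.toRingHom.comp (C : ℂ →+* P3) =
          (C : Polynomial ℂ →+* Amod).comp (Polynomial.C : ℂ →+* Polynomial ℂ) := by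
        ext a
        simp [φ0, algebraMap_eq]
      have h2 : φ0.toRingHom (X 1) = (C : Polynomial ℂ →+* Amod) Polynomial.X := by
        simp [φ0]
      rw [h1, h2, ← Polynomial.hom_eval₂, Polynomial.eval₂_C_X]
    · intro u
      simp [ψ0, φ0]
  simpa using this

lemma ker_phi0 : RingHom.ker φ0.toRingHom = Ideal.span {(X 0 : P3)} := by
  apply le_antisymm
  · intro g hg
    have h := sub_section_mem (Ideal.span {(X 0 : P3)}) φ0.toRingHom ψ0 psi0_phi0_C ?_ g
    · rw [RingHom.mem_ker] at hg
      rw [hg, map_zero, sub_zero] at h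
      exact h
    · intro i
      fin_cases i
      · simpa [φ0] using Ideal.subset_span (by simp)
      · simp [φ0, ψ0]
      · simp [φ0, ψ0]
  · rw [Ideal.span_le]
    intro x hx
    simp at hx
    simp [hx, RingHom.mem_ker, φ0]

-- case 2 hom: X0 ↦ C X, X1 ↦ X, X2 ↦ X^2 ; kernel = (X2 - X1^2)
noncomputable def φ1 : P3 →ₐ[ℂ] Amod := aeval ![C Polynomial.X, X PUnit.unit, X PUnit.unit ^ 2]
noncomputable def ψ1 : Amod →+* P3 :=
  eval₂Hom (Polynomial.eval₂RingHom (C : ℂ →+* P3) (X 0)) (fun _ => X 1)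

lemma psi1_phi1_C (a : ℂ) : ψ1 (φ1 (C a)) = C a := by
  simp [φ1, ψ1, algebraMap_eq]

lemma phi1_surj : Function.Surjective φ1 := by
  intro t
  refine ⟨ψ1 t, ?_⟩
  have : (φ1.toRingHom.comp ψ1) t = RingHom.id Amod t := by
    congr 1
    apply MvPolynomial.ringHom_ext
    · intro q
      simp only [RingHom.comp_apply, RingHom.id_apply, ψ1, eval₂Hom_C]
      rw [Polynomial.coe_eval₂RingHom, Polynomial.hom_eval₂]
      have h1 : φ1.toRingHom.comp (C : ℂ →+* P3) =
          (C : Polynomial ℂ →+* Amod).comp (Polynomial.C : ℂ →+* Polynomial ℂ) := by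
        ext a
        simp [φ1, algebraMap_eq]
      have h2 : φ1.toRingHom (X 0) = (C : Polynomial ℂ →+* Amod) Polynomial.X := by
        simp [φ1]
      rw [h1, h2, ← Polynomial.hom_eval₂, Polynomial.eval₂_C_X]
    · intro u
      simp [ψ1, φ1]
  simpa using this

lemma ker_phi1 : RingHom.ker φ1.toRingHom = Ideal.span {(X 2 - X 1 ^ 2 : P3)} := by
  apply le_antisymm
  · intro g hg
    have h := sub_section_mem (Ideal.span {(X 2 - X 1 ^ 2 : P3)}) φ1.toRingHom ψ1 psi1_phi1_C ?_ g
    · rw [RingHom.mem_ker] at hg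
      rw [hg, map_zero, sub_zero] at h
      exact h
    · intro i
      fin_cases i
      · simp [φ1, ψ1]
      · simp [φ1, ψ1]
      · show (X 2 : P3) - ψ1 (φ1 (X 2)) ∈ Ideal.span {(X 2 - X 1 ^ 2 : P3)}
        have e : (X 2 : P3) - ψ1 (φ1 (X 2)) = X 2 - X 1 ^ 2 := by simp [φ1, ψ1]
        rw [e]
        exact Ideal.subset_span rfl
  · rw [Ideal.span_le]
    intro x hx
    simp only [Set.mem_singleton_iff] at hx
    subst hx
    show (X 2 - X 1 ^ 2 : P3) ∈ RingHom.ker φ1.toRingHom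
    rw [RingHom.mem_ker, map_sub]
    simp [φ1]

-- homs for showing (X0), (X0,X1), (X0,X1,X2) are prime
noncomputable def φB : P3 →ₐ[ℂ] Polynomial ℂ := aeval ![0, 0, Polynomial.X]
noncomputable def ψB : Polynomial ℂ →+* P3 := Polynomial.eval₂RingHom (C : ℂ →+* P3) (X 2)

lemma ker_phiB : RingHom.ker φB.toRingHom = Ideal.span {(X 0 : P3), X 1} := by
  apply le_antisymm
  · intro g hg
    have h := sub_section_mem (Ideal.span {(X 0 : P3), X 1}) φB.toRingHom ψB
        (by intro a; simp [φB, ψB]) ?_ g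
    · rw [RingHom.mem_ker] at hg
      rw [hg, map_zero, sub_zero] at h
      exact h
    · intro i
      fin_cases i
      · simpa [φB, ψB] using Ideal.subset_span (by simp)
      · simpa [φB, ψB] using Ideal.subset_span (by simp)
      · simp [φB, ψB]
  · rw [Ideal.span_le]
    rintro x hx
    simp only [Set.mem_insert_iff, Set.mem_singleton_iff] at hx
    rcases hx with rfl | rfl <;> simp [RingHom.mem_ker, φB]

noncomputable def φC : P3 →ₐ[ℂ] ℂ := aeval (fun _ => (0 : ℂ))

lemma ker_phiC : RingHom.ker φC.toRingHom = Ideal.span {(X 0 : P3), X 1, X 2} := by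
  apply le_antisymm
  · intro g hg
    have h := sub_section_mem (Ideal.span {(X 0 : P3), X 1, X 2}) φC.toRingHom (C : ℂ →+* P3)
        (by intro a; simp [φC]) ?_ g
    · rw [RingHom.mem_ker] at hg
      rw [hg, map_zero, sub_zero] at h
      exact h
    · intro i
      fin_cases i <;>
        simpa [φC] using Ideal.subset_span (by simp)
  · rw [Ideal.span_le]
    rintro x hx
    simp only [Set.mem_insert_iff, Set.mem_singleton_iff] at hx
    rcases hx with rfl | rfl | rfl <;> simp [RingHom.mem_ker, φC]

lemma phiC_surj : Function.Surjective φC := fun a => ⟨C a, by simp [φC]⟩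

-- ### no chain of four primes in P3 containing f
lemma p3_no_four_chain {p0 p1 p2 p3' : Ideal P3}
    (h0 : p0.IsPrime) (h1 : p1.IsPrime) (h2 : p2.IsPrime) (h3 : p3'.IsPrime)
    (l01 : p0 < p1) (l12 : p1 < p2) (l23 : p2 < p3')
    (hf : (X 0 * X 2 - X 0 * X 1 ^ 2 : P3) ∈ p0) : False := by
  have hmul : (X 0 : P3) * (X 2 - X 1 ^ 2) ∈ p0 := by
    have e : (X 0 : P3) * (X 2 - X 1 ^ 2) = X 0 * X 2 - X 0 * X 1 ^ 2 := by ring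
    rw [e]; exact hf
  rcases h0.mem_or_mem hmul with hc | hc
  · -- X 0 ∈ p0, push along φ0
    have hker : RingHom.ker φ0.toRingHom ≤ p0 := by
      rw [ker_phi0, Ideal.span_le, Set.singleton_subset_iff]; exact hc
    have hk0 := hker
    have hk1 := le_trans hker l01.le
    have hk2 := le_trans hk1 l12.le
    have hk3 := le_trans hk2 l23.le
    have hsurj : Function.Surjective φ0.toRingHom := phi0_surj
    exact amod_no_four_chain
      (Ideal.map_isPrime_of_surjective hsurj hk0)
      (Ideal.map_isPrime_of_surjective hsurj hk1)
      (Ideal.map_isPrime_of_surjective hsurj hk2)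
      (Ideal.map_isPrime_of_surjective hsurj hk3)
      (map_lt_map_of_surjective _ hsurj hk0 l01)
      (map_lt_map_of_surjective _ hsurj hk1 l12)
      (map_lt_map_of_surjective _ hsurj hk2 l23)
  · -- X 2 - X 1 ^ 2 ∈ p0, push along φ1
    have hker : RingHom.ker φ1.toRingHom ≤ p0 := by
      rw [ker_phi1, Ideal.span_le, Set.singleton_subset_iff]; exact hc
    have hk0 := hker
    have hk1 := le_trans hker l01.le
    have hk2 := le_trans hk1 l12.le
    have hk3 := le_trans hk2 l23.le
    have hsurj : Function.Surjective φ1.toRingHom := phi1_surj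
    exact amod_no_four_chain
      (Ideal.map_isPrime_of_surjective hsurj hk0)
      (Ideal.map_isPrime_of_surjective hsurj hk1)
      (Ideal.map_isPrime_of_surjective hsurj hk2)
      (Ideal.map_isPrime_of_surjective hsurj hk3)
      (map_lt_map_of_surjective _ hsurj hk0 l01)
      (map_lt_map_of_surjective _ hsurj hk1 l12)
      (map_lt_map_of_surjective _ hsurj hk2 l23)


-- ### basic objects
noncomputable abbrev fIdeal : Ideal P3 :=
  Ideal.span {(X 0 * X 2 - X 0 * X 1 ^ 2 : MvPolynomial (Fin 3) ℂ)}

noncomputable abbrev mkq : P3 →+* chartRing := Ideal.Quotient.mk fIdeal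

noncomputable abbrev Pi0 : Ideal P3 := Ideal.span {X 0}
noncomputable abbrev Pi1 : Ideal P3 := Ideal.span {X 0, X 1}
noncomputable abbrev Pi2 : Ideal P3 := Ideal.span {X 0, X 1, X 2}

lemma f_mem_Pi0 : (X 0 * X 2 - X 0 * X 1 ^ 2 : P3) ∈ Pi0 :=
  Ideal.mem_span_singleton'.mpr ⟨X 2 - X 1 ^ 2, by ring⟩

lemma fIdeal_le_Pi0 : fIdeal ≤ Pi0 := by
  rw [Ideal.span_le, Set.singleton_subset_iff]; exact f_mem_Pi0

lemma Pi0_le_Pi1 : Pi0 ≤ Pi1 := Ideal.span_mono (by simp)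
lemma Pi1_le_Pi2 : Pi1 ≤ Pi2 := Ideal.span_mono (by intro x hx; simp at hx; rcases hx with rfl|rfl <;> simp)

lemma Pi0_prime : Pi0.IsPrime := by
  show (Ideal.span {(X 0 : P3)}).IsPrime
  rw [← ker_phi0]; exact RingHom.ker_isPrime _
lemma Pi1_prime : Pi1.IsPrime := by
  show (Ideal.span {(X 0 : P3), X 1}).IsPrime
  rw [← ker_phiB]; exact RingHom.ker_isPrime _
lemma Pi2_prime : Pi2.IsPrime := by
  show (Ideal.span {(X 0 : P3), X 1, X 2}).IsPrime
  rw [← ker_phiC]; exact RingHom.ker_isPrime _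
lemma Pi2_max : Pi2.IsMaximal := by
  show (Ideal.span {(X 0 : P3), X 1, X 2}).IsMaximal
  rw [← ker_phiC]
  exact RingHom.ker_isMaximal_of_surjective φC.toRingHom phiC_surj

lemma Pi0_lt_Pi1 : Pi0 < Pi1 := by
  refine lt_of_le_of_ne Pi0_le_Pi1 fun e => ?_
  have h1 : (X 1 : P3) ∈ Pi1 := Ideal.subset_span (by simp)
  rw [← e] at h1
  have h2 : (X 1 : P3) ∈ RingHom.ker φ0.toRingHom := by rw [ker_phi0]; exact h1
  rw [RingHom.mem_ker] at h2
  simp [φ0] at h2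

lemma Pi1_lt_Pi2 : Pi1 < Pi2 := by
  refine lt_of_le_of_ne Pi1_le_Pi2 fun e => ?_
  have h1 : (X 2 : P3) ∈ Pi2 := Ideal.subset_span (by simp)
  rw [← e] at h1
  have h2 : (X 2 : P3) ∈ RingHom.ker φB.toRingHom := by rw [ker_phiB]; exact h1
  rw [RingHom.mem_ker] at h2
  simp [φB] at h2

lemma origin_eq : originIdeal = Ideal.map mkq Pi2 := by
  rw [originIdeal, Ideal.map_span, Set.image_insert_eq, Set.image_insert_eq,
    Set.image_singleton]

lemma mkq_surj : Function.Surjective mkq := Ideal.Quotient.mk_surjective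
lemma mkq_ker : RingHom.ker mkq = fIdeal := Ideal.mk_ker

noncomputable abbrev Ri0 : Ideal chartRing := Ideal.map mkq Pi0
noncomputable abbrev Ri1 : Ideal chartRing := Ideal.map mkq Pi1

lemma Ri0_prime : Ri0.IsPrime := by
  haveI := Pi0_prime
  exact Ideal.map_isPrime_of_surjective mkq_surj (mkq_ker.trans_le fIdeal_le_Pi0)
lemma Ri1_prime : Ri1.IsPrime := by
  haveI := Pi1_prime
  exact Ideal.map_isPrime_of_surjective mkq_surj
    (mkq_ker.trans_le (fIdeal_le_Pi0.trans Pi0_le_Pi1))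
lemma origin_prime : originIdeal.IsPrime := by
  haveI := Pi2_prime
  rw [origin_eq]
  exact Ideal.map_isPrime_of_surjective mkq_surj
    (mkq_ker.trans_le ((fIdeal_le_Pi0.trans Pi0_le_Pi1).trans Pi1_le_Pi2))

lemma Ri0_lt_Ri1 : Ri0 < Ri1 :=
  map_lt_map_of_surjective mkq mkq_surj (mkq_ker.trans_le fIdeal_le_Pi0) Pi0_lt_Pi1
lemma Ri1_lt_origin : Ri1 < originIdeal := by
  rw [origin_eq]
  exact map_lt_map_of_surjective mkq mkq_surj
    (mkq_ker.trans_le (fIdeal_le_Pi0.trans Pi0_le_Pi1)) Pi1_lt_Pi2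

-- φC kills f
lemma phiC_f : φC.toRingHom (X 0 * X 2 - X 0 * X 1 ^ 2 : P3) = 0 := by
  simp [φC]

lemma origin_max : originIdeal.IsMaximal := by
  have hlift : ∀ a ∈ fIdeal, φC.toRingHom a = 0 := by
    intro a ha
    have : fIdeal ≤ RingHom.ker φC.toRingHom := by
      rw [Ideal.span_le, Set.singleton_subset_iff, SetLike.mem_coe, RingHom.mem_ker]
      exact phiC_f
    exact this ha
  set Ψ : chartRing →+* ℂ := Ideal.Quotient.lift fIdeal φC.toRingHom hlift with hΨ
  have hker : originIdeal = RingHom.ker Ψ := by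
    apply le_antisymm
    · rw [origin_eq, Ideal.map_le_iff_le_comap]
      intro x hx
      rw [Ideal.mem_comap, RingHom.mem_ker, hΨ, Ideal.Quotient.lift_mk]
      have : x ∈ RingHom.ker φC.toRingHom := by rw [ker_phiC]; exact hx
      exact this
    · intro y hy
      obtain ⟨g, rfl⟩ := mkq_surj y
      rw [RingHom.mem_ker, hΨ, Ideal.Quotient.lift_mk] at hy
      have hg2 : g ∈ Ideal.span {(X 0 : P3), X 1, X 2} := by
        rw [← ker_phiC, RingHom.mem_ker]; exact hy
      rw [origin_eq]
      exact Ideal.mem_map_of_mem _ hg2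
  rw [hker]
  exact RingHom.ker_isMaximal_of_surjective Ψ
    (fun a => ⟨mkq (C a), by simp [hΨ, Ideal.Quotient.lift_mk, φC]⟩)

-- ### Krull dimension
lemma krull_dim_two (hpr : originIdeal.IsPrime) :
    haveI := hpr
    ringKrullDim (Localization.AtPrime originIdeal) = 2 := by
  haveI := hpr
  let e := IsLocalization.AtPrime.orderIsoOfPrime (Localization.AtPrime originIdeal) originIdeal
  haveI hR0 := Ri0_prime
  haveI hR1 := Ri1_prime
  have hle0 : Ri0 ≤ originIdeal := le_trans Ri0_lt_Ri1.le Ri1_lt_origin.le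
  have hle1 : Ri1 ≤ originIdeal := Ri1_lt_origin.le
  let u0 := e.symm ⟨Ri0, hR0, hle0⟩
  let u1 := e.symm ⟨Ri1, hR1, hle1⟩
  let u2 := e.symm ⟨originIdeal, hpr, le_rfl⟩
  have h01 : u0 < u1 := e.symm.lt_iff_lt.mpr (Subtype.mk_lt_mk.mpr Ri0_lt_Ri1)
  have h12 : u1 < u2 := e.symm.lt_iff_lt.mpr (Subtype.mk_lt_mk.mpr Ri1_lt_origin)
  let sp : Fin 3 → PrimeSpectrum (Localization.AtPrime originIdeal) :=
    ![⟨u0.1, u0.2⟩, ⟨u1.1, u1.2⟩, ⟨u2.1, u2.2⟩]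
  have hmono : ∀ i : Fin 2, sp i.castSucc < sp i.succ := by
    intro i
    fin_cases i
    · show (⟨u0.1, u0.2⟩ : PrimeSpectrum _) < ⟨u1.1, u1.2⟩
      rw [← PrimeSpectrum.asIdeal_lt_asIdeal]
      exact h01
    · show (⟨u1.1, u1.2⟩ : PrimeSpectrum _) < ⟨u2.1, u2.2⟩
      rw [← PrimeSpectrum.asIdeal_lt_asIdeal]
      exact h12
  let ch : LTSeries (PrimeSpectrum (Localization.AtPrime originIdeal)) := ⟨2, sp, hmono⟩
  haveI : Nonempty (PrimeSpectrum (Localization.AtPrime originIdeal)) := ⟨sp 0⟩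
  have hlow : (2 : WithBot ℕ∞) ≤ ringKrullDim (Localization.AtPrime originIdeal) := by
    have h := Order.LTSeries.length_le_krullDim ch
    exact_mod_cast h
  have hup : ringKrullDim (Localization.AtPrime originIdeal) ≤ 2 := by
    show Order.krullDim (PrimeSpectrum (Localization.AtPrime originIdeal)) ≤ 2
    rw [Order.krullDim_eq_iSup_length]
    have hsup : (⨆ p : LTSeries (PrimeSpectrum (Localization.AtPrime originIdeal)),
        (p.length : ℕ∞)) ≤ (2 : ℕ∞) := by
      apply iSup_le
      intro l
      suffices hll : l.length ≤ 2 by exact_mod_cast hll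
      by_contra hl
      push_neg at hl
      have hlen : 3 ≤ l.length := hl
      have hstep : ∀ (i j : ℕ) (hi : i < l.length + 1) (hj : j < l.length + 1), i < j →
          l.toFun ⟨i, hi⟩ < l.toFun ⟨j, hj⟩ := fun i j hi hj hij =>
        l.strictMono (Fin.mk_lt_mk.mpr hij)
      have i0 : (0 : ℕ) < l.length + 1 := by omega
      have i1 : (1 : ℕ) < l.length + 1 := by omega
      have i2 : (2 : ℕ) < l.length + 1 := by omega
      have i3 : (3 : ℕ) < l.length + 1 := by omega
      let A : ℕ → PrimeSpectrum (Localization.AtPrime originIdeal) :=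
        fun k => if hk : k < l.length + 1 then l.toFun ⟨k, hk⟩ else l.toFun 0
      -- transfer to chartRing
      let v : Fin (l.length + 1) → {p : Ideal chartRing // p.IsPrime ∧ p ≤ originIdeal} :=
        fun k => e ⟨(l.toFun k).asIdeal, (l.toFun k).isPrime⟩
      have hv : ∀ {k k' : Fin (l.length + 1)}, k < k' → (v k).1 < (v k').1 := by
        intro k k' hk
        exact Subtype.mk_lt_mk.mp (e.lt_iff_lt.mpr (Subtype.mk_lt_mk.mpr
          ((PrimeSpectrum.asIdeal_lt_asIdeal _ _).mpr (l.strictMono hk))))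
      let w : Fin (l.length + 1) → Ideal P3 := fun k => Ideal.comap mkq (v k).1
      have hwprime : ∀ k, (w k).IsPrime := by
        intro k
        haveI := (v k).2.1
        exact Ideal.comap_isPrime _ _
      have hwlt : ∀ {k k' : Fin (l.length + 1)}, k < k' → w k < w k' := fun hk =>
        comap_lt_comap_of_surjective mkq mkq_surj (hv hk)
      have hfw : (X 0 * X 2 - X 0 * X 1 ^ 2 : P3) ∈ w ⟨0, i0⟩ := by
        rw [Ideal.mem_comap]
        have : mkq (X 0 * X 2 - X 0 * X 1 ^ 2 : P3) = 0 :=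
          Ideal.Quotient.eq_zero_iff_mem.mpr (Ideal.subset_span rfl)
        rw [this]
        exact zero_mem _
      exact p3_no_four_chain (hwprime ⟨0, i0⟩) (hwprime ⟨1, i1⟩) (hwprime ⟨2, i2⟩)
        (hwprime ⟨3, i3⟩)
        (hwlt (Fin.mk_lt_mk.mpr (by omega))) (hwlt (Fin.mk_lt_mk.mpr (by omega)))
        (hwlt (Fin.mk_lt_mk.mpr (by omega))) hfw
    simpa using WithBot.coe_le_coe.mpr hsup
  exact le_antisymm hup hlow

-- ### the maximal ideal needs three generators
open TrivSqZeroExt in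
lemma not_two_generated (hpr : originIdeal.IsPrime) :
    haveI := hpr
    ¬ ∃ x y : Localization.AtPrime originIdeal,
        IsLocalRing.maximalIdeal (Localization.AtPrime originIdeal) = Ideal.span {x, y} := by
  haveI := hpr
  rintro ⟨x, y, hxy⟩
  set T : Type := TrivSqZeroExt ℂ (Fin 3 → ℂ) with hT
  set Φ : P3 →ₐ[ℂ] T := aeval (fun i : Fin 3 => (inr (Pi.single i 1) : T)) with hΦ
  have hΦf : Φ.toRingHom (X 0 * X 2 - X 0 * X 1 ^ 2 : P3) = 0 := by
    show Φ (X 0 * X 2 - X 0 * X 1 ^ 2 : P3) = 0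
    rw [map_sub, map_mul, map_mul, map_pow]
    simp only [hΦ, aeval_X]
    rw [inr_mul_inr, sq, inr_mul_inr, mul_zero, sub_zero]
  have hlift : ∀ a ∈ fIdeal, Φ.toRingHom a = 0 := by
    intro a ha
    have hsub : fIdeal ≤ RingHom.ker Φ.toRingHom := by
      rw [Ideal.span_le, Set.singleton_subset_iff, SetLike.mem_coe, RingHom.mem_ker]
      exact hΦf
    exact hsub ha
  set Φbar : chartRing →+* T := Ideal.Quotient.lift fIdeal Φ.toRingHom hlift with hΦbar
  -- the first component of Φ is evaluation at the origin
  have hfst : ∀ g : P3, fst (Φ g) = φC g := by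
    intro g
    have hcomp : (fstHom ℂ ℂ (Fin 3 → ℂ)).comp Φ = φC := by
      apply MvPolynomial.algHom_ext
      intro i
      simp [hΦ, φC]
    calc fst (Φ g) = ((fstHom ℂ ℂ (Fin 3 → ℂ)).comp Φ) g := rfl
      _ = φC g := by rw [hcomp]
  have hunits : ∀ s : originIdeal.primeCompl, IsUnit (Φbar s) := by
    rintro ⟨s, hs⟩
    obtain ⟨g, rfl⟩ := mkq_surj s
    have h1 : Φbar (mkq g) = Φ g := Ideal.Quotient.lift_mk _ _ _
    have h2 : fst (Φ g) ≠ 0 := by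
      intro h0
      apply hs
      have hg2 : g ∈ Ideal.span {(X 0 : P3), X 1, X 2} := by
        rw [← ker_phiC, RingHom.mem_ker]
        rw [hfst g] at h0
        exact h0
      rw [origin_eq]
      exact Ideal.mem_map_of_mem _ hg2
    rw [h1]
    letI := invertibleOfNonzero h2
    letI := invertibleOfInvertibleFst (Φ g)
    exact isUnit_of_invertible _
  set θ : Localization.AtPrime originIdeal →+* T :=
    IsLocalization.lift (M := originIdeal.primeCompl) hunits with hθ
  have hcomp : θ.comp (algebraMap chartRing (Localization.AtPrime originIdeal)) = Φbar :=
    IsLocalization.lift_comp hunits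
  -- compute the image of the maximal ideal in two ways
  have hmax : Ideal.map (algebraMap chartRing (Localization.AtPrime originIdeal)) originIdeal =
      IsLocalRing.maximalIdeal (Localization.AtPrime originIdeal) :=
    Localization.AtPrime.map_eq_maximalIdeal
  have hW1 : Ideal.map θ (IsLocalRing.maximalIdeal (Localization.AtPrime originIdeal)) =
      Ideal.span {(inr (Pi.single 0 1) : T), inr (Pi.single 1 1), inr (Pi.single 2 1)} := by
    rw [← hmax, Ideal.map_map, hcomp, origin_eq, Ideal.map_map]
    have hbm : Φbar.comp mkq = Φ.toRingHom := RingHom.ext fun g => by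
      show Φbar (mkq g) = Φ.toRingHom g
      exact Ideal.Quotient.lift_mk _ _ _
    rw [hbm, Ideal.map_span, Set.image_insert_eq, Set.image_insert_eq, Set.image_singleton]
    have h0 : Φ.toRingHom (X 0) = (inr (Pi.single 0 1) : T) := by simp [hΦ]
    have h1 : Φ.toRingHom (X 1) = (inr (Pi.single 1 1) : T) := by simp [hΦ]
    have h2 : Φ.toRingHom (X 2) = (inr (Pi.single 2 1) : T) := by simp [hΦ]
    rw [h0, h1, h2]
  have hW2 : Ideal.map θ (IsLocalRing.maximalIdeal (Localization.AtPrime originIdeal)) =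
      Ideal.span {θ x, θ y} := by
    rw [hxy, Ideal.map_span, Set.image_insert_eq, Set.image_singleton]
  have hxmem : θ x ∈ Ideal.span {(inr (Pi.single 0 1) : T), inr (Pi.single 1 1),
      inr (Pi.single 2 1)} := by
    rw [← hW1, hW2]
    exact Ideal.subset_span (by simp)
  have hymem : θ y ∈ Ideal.span {(inr (Pi.single 0 1) : T), inr (Pi.single 1 1),
      inr (Pi.single 2 1)} := by
    rw [← hW1, hW2]
    exact Ideal.subset_span (by simp)
  -- everything in that span has first component zero
  have hker : Ideal.span {(inr (Pi.single 0 1) : T), inr (Pi.single 1 1), inr (Pi.single 2 1)} ≤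
      RingHom.ker (fstHom ℂ ℂ (Fin 3 → ℂ)).toRingHom := by
    rw [Ideal.span_le]
    rintro t ht
    simp only [Set.mem_insert_iff, Set.mem_singleton_iff] at ht
    rcases ht with rfl | rfl | rfl <;> simp [RingHom.mem_ker]
  have hfx : fst (θ x) = 0 := hker hxmem
  have hfy : fst (θ y) = 0 := hker hymem
  -- each basis vector lies in the ℂ-span of snd (θ x) and snd (θ y)
  have hbasis : ∀ j : Fin 3, (Pi.single j 1 : Fin 3 → ℂ) ∈
      Submodule.span ℂ {snd (θ x), snd (θ y)} := by
    intro j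
    have hj : (inr (Pi.single j 1) : T) ∈ Ideal.span {θ x, θ y} := by
      rw [← hW2, hW1]
      apply Ideal.subset_span
      fin_cases j <;> simp
    obtain ⟨a, b, hab⟩ := Ideal.mem_span_pair.mp hj
    have hsnd := congrArg snd hab
    rw [snd_add, snd_mul, snd_mul, hfx, hfy, snd_inr] at hsnd
    rw [← hsnd]
    simp only [MulOpposite.op_zero, zero_smul, smul_zero, add_zero]
    exact Submodule.add_mem _
      (Submodule.smul_mem _ _ (Submodule.subset_span (by simp)))
      (Submodule.smul_mem _ _ (Submodule.subset_span (by simp)))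
  -- hence the two vectors span ℂ³, contradiction
  have htop : Submodule.span ℂ {snd (θ x), snd (θ y)} = ⊤ := by
    rw [eq_top_iff]
    intro v _
    have hv : v = ∑ j : Fin 3, v j • (Pi.single j 1 : Fin 3 → ℂ) := by
      ext k
      simp [Pi.single_apply]
    rw [hv]
    exact Submodule.sum_mem _ fun j _ => Submodule.smul_mem _ _ (hbasis j)
  have h1 := finrank_span_le_card (R := ℂ) ({snd (θ x), snd (θ y)} : Set (Fin 3 → ℂ))
  rw [htop] at h1
  have h2 : Module.finrank ℂ (⊤ : Submodule ℂ (Fin 3 → ℂ)) = 3 := by simp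
  rw [h2] at h1
  have h3 : (({snd (θ x), snd (θ y)} : Set (Fin 3 → ℂ)).toFinset).card ≤ 2 := by
    simp only [Set.toFinset_insert]
    exact (Finset.card_insert_le _ _).trans (by simp)
  omega

/-- the ideal `(c,a,k)` of `R = ℂ[c,a,k]/(ck − ca²)` is maximal, and the
localization of `R` at it is a Noetherian local ring of Krull dimension 2 whose maximal
ideal cannot be generated by 2 elements; in particular this local ring is not regular. -/
theorem chart_localization_not_regular :
    originIdeal.IsMaximal ∧
    ∀ hpr : originIdeal.IsPrime,
      haveI : originIdeal.IsPrime := hpr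
      IsNoetherianRing (Localization.AtPrime originIdeal) ∧
      IsLocalRing (Localization.AtPrime originIdeal) ∧
      ringKrullDim (Localization.AtPrime originIdeal) = 2 ∧
      ¬ ∃ x y : Localization.AtPrime originIdeal,
          IsLocalRing.maximalIdeal (Localization.AtPrime originIdeal) =
            Ideal.span {x, y} := by

  refine ⟨origin_max, fun hpr => ?_⟩
  haveI := hpr
  refine ⟨?_, ?_, krull_dim_two hpr, not_two_generated hpr⟩
  · haveI : IsNoetherianRing chartRing := Ideal.Quotient.isNoetherianRing _
    exact IsLocalization.isNoetherianRing originIdeal.primeCompl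
      (Localization.AtPrime originIdeal) inferInstance
  · infer_instance
end
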